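/- arXiv:2407.05634 — 7 statements merged into one kernel-verified Lean document; each statement's English description precedes it below -/
import Mathlib

section
/- Let F : ℤ → ℂ be finitely supported and let (a,b) be its nonlinear Fourier transform. Then the constant (0-th) Fourier coefficient of the Laurent polynomial a equals ∏_{j∈ℤ} (1 + |F_j|²)^{−1/2}; in particular it is a positive real number. -/
open scoped BigOperators

/-- The `n`-th factor `(1+|F_n|²)^{−1/2}·[[1, F_n zⁿ],[−conj(F_n) z^{−n}, 1]]`
of the nonlinear Fourier transform. -/
noncomputable def nlftFactor (F : ℤ → ℂ) (n : ℤ) (z : ℂ) : Matrix (Fin 2) (Fin 2) ℂ :=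
  (((Real.sqrt (1 + ‖F n‖^2) : ℝ) : ℂ))⁻¹ •
    !![1, F n * z ^ n; -((starRingEnd ℂ) (F n)) * z ^ (-n), 1]

/-- The nonlinear Fourier transform matrix of `F` restricted to `[−d, d]`: the ordered
product of the factors, lower indices to the left. -/
noncomputable def nlftMat (F : ℤ → ℂ) (d : ℕ) (z : ℂ) : Matrix (Fin 2) (Fin 2) ℂ :=
  ((List.range (2 * d + 1)).map (fun j => nlftFactor F ((j : ℤ) - (d : ℤ)) z)).prod

namespace Stmt4Aux

open Complex

/-- The character `k ↦ exp(ikθ)` as a monoid hom on `Multiplicative ℤ`. -/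
noncomputable def expHom (θ : ℝ) : Multiplicative ℤ →* ℂ where
  toFun k := Complex.exp (Complex.I * θ * (Multiplicative.toAdd k : ℤ))
  map_one' := by simp
  map_mul' x y := by
    simp only [toAdd_mul, ← Complex.exp_add]
    congr 1
    push_cast
    ring

/-- Evaluation of a Laurent polynomial at `exp(iθ)`, as an algebra homomorphism. -/
noncomputable def ev (θ : ℝ) : AddMonoidAlgebra ℂ ℤ →ₐ[ℂ] ℂ :=
  AddMonoidAlgebra.lift ℂ ℂ ℤ (expHom θ)

lemma ev_single (θ : ℝ) (k : ℤ) (c : ℂ) :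
    ev θ (AddMonoidAlgebra.single k c) = c * Complex.exp (Complex.I * θ * k) := by
  rw [ev, AddMonoidAlgebra.lift_single]
  simp [expHom, smul_eq_mul]

lemma ev_apply (θ : ℝ) (p : AddMonoidAlgebra ℂ ℤ) :
    ev θ p = ∑ k ∈ p.coeff.support, p.coeff k * Complex.exp (Complex.I * θ * k) := by
  rw [ev, AddMonoidAlgebra.lift_apply]
  simp [Finsupp.sum, expHom, smul_eq_mul]

/-- The mean of a Laurent polynomial over the circle is its constant coefficient. -/
lemma integral_ev (p : AddMonoidAlgebra ℂ ℤ) :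
    (∫ θ in (0:ℝ)..(2 * Real.pi), ev θ p) = (2 * Real.pi) * p.coeff 0 := by
  simp_rw [ev_apply]
  rw [intervalIntegral.integral_finset_sum]
  · have hterm : ∀ k ∈ p.coeff.support,
        (∫ θ in (0:ℝ)..(2 * Real.pi), p.coeff k * Complex.exp (Complex.I * θ * k))
          = if k = 0 then (2 * Real.pi) * p.coeff 0 else 0 := by
      intro k hk0
      rw [intervalIntegral.integral_const_mul]
      by_cases hk : k = 0
      · subst hk; simp [mul_comm]
      · have hc : (Complex.I * k) ≠ 0 := by
          simp [Complex.I_ne_zero, Complex.ext_iff]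
          exact_mod_cast hk
        have harg : ∀ θ : ℝ, Complex.I * θ * k = (Complex.I * k) * θ := by intro θ; ring
        simp_rw [harg]
        rw [integral_exp_mul_complex hc]
        have key : Complex.exp (Complex.I * k * (2 * (Real.pi : ℂ))) = 1 := by
          have h1 : Complex.I * k * (2 * (Real.pi : ℂ))
              = (k : ℂ) * (2 * (Real.pi : ℂ) * Complex.I) := by ring
          rw [h1]
          exact_mod_cast Complex.exp_int_mul_two_pi_mul_I k
        simp [key, hk]
    rw [Finset.sum_congr rfl hterm, Finset.sum_ite_eq' p.coeff.support 0]
    by_cases h0 : (0 : ℤ) ∈ p.coeff.support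
    · simp [h0]
    · simp [h0, Finsupp.notMem_support_iff.mp h0]
  · intro k _
    apply Continuous.intervalIntegrable
    fun_prop

/-- The unnormalized `n`-th NLFT factor over Laurent polynomials. -/
noncomputable def Qmat (F : ℤ → ℂ) (n : ℤ) : Matrix (Fin 2) (Fin 2) (AddMonoidAlgebra ℂ ℤ) :=
  !![1, AddMonoidAlgebra.single n (F n); -(AddMonoidAlgebra.single (-n) ((starRingEnd ℂ) (F n))), 1]

/-- The unnormalized partial products. -/
noncomputable def Pmat (F : ℤ → ℂ) (d : ℕ) (J : ℕ) : Matrix (Fin 2) (Fin 2) (AddMonoidAlgebra ℂ ℤ) :=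
  ((List.range J).map (fun j => Qmat F ((j : ℤ) - (d : ℤ)))).prod

lemma Pmat_succ (F : ℤ → ℂ) (d J : ℕ) :
    Pmat F d (J + 1) = Pmat F d J * Qmat F ((J : ℤ) - d) := by
  simp [Pmat, List.range_succ]

/-- The key structural invariant: the `a`-entry has only nonpositive frequencies with constant
coefficient `1`, and the `b`-entry has frequencies `< J - d`. -/
lemma Pmat_inv (F : ℤ → ℂ) (d : ℕ) : ∀ J : ℕ,
    ((Pmat F d J 0 0).coeff 0 = 1 ∧ ∀ k : ℤ, 0 < k → (Pmat F d J 0 0).coeff k = 0) ∧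
    (∀ k : ℤ, (J : ℤ) - d ≤ k → (Pmat F d J 0 1).coeff k = 0) := by
  intro J
  induction J with
  | zero =>
    have h1 : Pmat F d 0 = 1 := by simp [Pmat]
    have hone : (1 : AddMonoidAlgebra ℂ ℤ) = AddMonoidAlgebra.single 0 1 :=
      AddMonoidAlgebra.one_def
    rw [h1]
    refine ⟨⟨?_, fun k hk => ?_⟩, fun k hk => ?_⟩
    · rw [Matrix.one_apply_eq, hone]
      exact Finsupp.single_eq_same
    · rw [Matrix.one_apply_eq, hone]
      exact Finsupp.single_eq_of_ne (by omega)
    · rw [Matrix.one_apply_ne (by decide)]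
      rfl
  | succ J ih =>
    obtain ⟨⟨ha0, ha⟩, hb⟩ := ih
    have e00 : Pmat F d (J + 1) 0 0
        = Pmat F d J 0 0 * 1 + Pmat F d J 0 1 *
            (-(AddMonoidAlgebra.single ((d : ℤ) - J) ((starRingEnd ℂ) (F ((J : ℤ) - d))))) := by
      rw [Pmat_succ, Matrix.mul_apply, Fin.sum_univ_two]
      simp [Qmat, neg_sub]
    have e01 : Pmat F d (J + 1) 0 1
        = Pmat F d J 0 0 * AddMonoidAlgebra.single ((J : ℤ) - d) (F ((J : ℤ) - d))
            + Pmat F d J 0 1 * 1 := by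
      rw [Pmat_succ, Matrix.mul_apply, Fin.sum_univ_two]
      simp [Qmat]
    refine ⟨⟨?_, fun k hk => ?_⟩, fun k hk => ?_⟩
    · rw [e00, AddMonoidAlgebra.coeff_add, Finsupp.add_apply, mul_one, mul_neg,
        AddMonoidAlgebra.coeff_neg, Finsupp.neg_apply,
        AddMonoidAlgebra.coeff_mul_single_apply]
      rw [ha0, hb (0 + -((d : ℤ) - J)) (by omega)]
      simp
    · rw [e00, AddMonoidAlgebra.coeff_add, Finsupp.add_apply, mul_one, mul_neg,
        AddMonoidAlgebra.coeff_neg, Finsupp.neg_apply,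
        AddMonoidAlgebra.coeff_mul_single_apply]
      rw [ha k hk, hb (k + -((d : ℤ) - J)) (by omega)]
      simp
    · rw [e01, AddMonoidAlgebra.coeff_add, Finsupp.add_apply, mul_one,
        AddMonoidAlgebra.coeff_mul_single_apply]
      rw [ha (k + -((J : ℤ) - d)) (by omega), hb k (by omega)]
      simp

lemma ev_CT (θ : ℝ) (c : ℂ) (m : ℤ) :
    ev θ (LaurentPolynomial.C c * LaurentPolynomial.T m)
      = c * Complex.exp (Complex.I * θ * m) := by
  rw [← LaurentPolynomial.single_eq_C_mul_T]
  exact ev_single θ m c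

lemma exp_zpow (θ : ℝ) (n : ℤ) :
    Complex.exp (Complex.I * θ) ^ n = Complex.exp (Complex.I * θ * n) := by
  rw [← Complex.exp_int_mul]
  congr 1
  ring

lemma factor_eq (F : ℤ → ℂ) (n : ℤ) (θ : ℝ) :
    nlftFactor F n (Complex.exp (Complex.I * θ)) =
      (((Real.sqrt (1 + ‖F n‖^2) : ℝ) : ℂ))⁻¹ • (Qmat F n).map (ev θ) := by
  unfold nlftFactor Qmat
  congr 1
  ext i j
  fin_cases i <;> fin_cases j <;>
    simp [Matrix.map_apply, ← map_mul, ev_CT, ev_single, exp_zpow, mul_neg,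
      Complex.exp_neg, Int.cast_neg, map_one, map_neg]

lemma map_ev_mul (θ : ℝ) (A B : Matrix (Fin 2) (Fin 2) (AddMonoidAlgebra ℂ ℤ)) :
    (A * B).map (ev θ) = A.map (ev θ) * B.map (ev θ) := by
  ext i j
  simp [Matrix.map_apply, Matrix.mul_apply, map_sum, map_mul]

lemma map_ev_one (θ : ℝ) :
    (1 : Matrix (Fin 2) (Fin 2) (AddMonoidAlgebra ℂ ℤ)).map (ev θ) = 1 := by
  ext i j
  simp [Matrix.map_apply, Matrix.one_apply, apply_ite (ev θ)]

lemma prod_eq (F : ℤ → ℂ) (d : ℕ) (θ : ℝ) : ∀ J : ℕ,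
    ((List.range J).map (fun j => nlftFactor F ((j : ℤ) - d) (Complex.exp (Complex.I * θ)))).prod
      = (∏ j ∈ Finset.range J,
          (((Real.sqrt (1 + ‖F ((j : ℤ) - d)‖^2) : ℝ) : ℂ))⁻¹)
            • (Pmat F d J).map (ev θ) := by
  intro J
  induction J with
  | zero =>
    have h1 : Pmat F d 0 = 1 := by simp [Pmat]
    simp [h1, map_ev_one]
  | succ J ih =>
    have hsplit :
        ((List.range (J + 1)).map
            (fun j => nlftFactor F ((j : ℤ) - d) (Complex.exp (Complex.I * θ)))).prod
          = ((List.range J).map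
              (fun j => nlftFactor F ((j : ℤ) - d) (Complex.exp (Complex.I * θ)))).prod
            * nlftFactor F ((J : ℤ) - d) (Complex.exp (Complex.I * θ)) := by
      simp [List.range_succ]
    rw [hsplit, ih, factor_eq, Pmat_succ, map_ev_mul, smul_mul_smul_comm,
      Finset.prod_range_succ]

end Stmt4Aux

/-- If `F : ℤ → ℂ` is finitely supported (within `[−d,d]`) and `(a,b)` is
its nonlinear Fourier transform, then the constant Fourier coefficient of the Laurent
polynomial `a` (i.e. its mean over the unit circle) equals
`∏_{j∈ℤ} (1+|F_j|²)^{−1/2}`, a positive real number. -/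
theorem stmt4 (F : ℤ → ℂ) (d : ℕ) (hF : ∀ n : ℤ, d < n.natAbs → F n = 0) :
    (1 / (2 * Real.pi) : ℂ) *
        (∫ θ in (0:ℝ)..(2 * Real.pi),
          (nlftMat F d (Complex.exp (Complex.I * θ))) 0 0)
      = ((∏' j : ℤ, ((1 + ‖F j‖^2) ^ (-(1/2) : ℝ)) : ℝ) : ℂ) ∧
    0 < ∏' j : ℤ, ((1 + ‖F j‖^2) ^ (-(1/2) : ℝ)) := by
  classical
  open Stmt4Aux in
  -- the real factors
  set g : ℤ → ℝ := fun j => (1 + ‖F j‖^2) ^ (-(1/2) : ℝ) with hg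
  have hg_pos : ∀ j, 0 < g j := fun j => Real.rpow_pos_of_pos (by positivity) _
  have hg_one : ∀ j ∉ Finset.Icc (-(d : ℤ)) (d : ℤ), g j = 1 := by
    intro j hj
    have hj' : (d : ℕ) < j.natAbs := by
      simp only [Finset.mem_Icc] at hj; omega
    simp [hg, hF j hj', Real.one_rpow]
  have htp : (∏' j : ℤ, g j) = ∏ j ∈ Finset.Icc (-(d : ℤ)) (d : ℤ), g j :=
    tprod_eq_prod hg_one
  have hIcc : (∏ j ∈ Finset.Icc (-(d : ℤ)) (d : ℤ), g j)
      = ∏ j ∈ Finset.range (2 * d + 1), g ((j : ℤ) - d) := by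
    refine Finset.prod_bij' (fun j _ => (j + d).toNat) (fun j _ => (j : ℤ) - d)
      ?_ ?_ ?_ ?_ ?_
    · intro a ha
      simp only [Finset.mem_Icc] at ha
      simp only [Finset.mem_range]
      omega
    · intro a ha
      simp only [Finset.mem_range] at ha
      simp only [Finset.mem_Icc]
      omega
    · intro a ha
      simp only [Finset.mem_Icc] at ha
      omega
    · intro a ha
      simp only [Finset.mem_range] at ha
      omega
    · intro a ha
      simp only [Finset.mem_Icc] at ha
      congr 1
      omega
  -- the complex scalar
  set C : ℂ := ∏ j ∈ Finset.range (2 * d + 1),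
      (((Real.sqrt (1 + ‖F ((j : ℤ) - d)‖^2) : ℝ) : ℂ))⁻¹ with hC
  have hterm : ∀ n : ℤ, ((g n : ℝ) : ℂ)
      = (((Real.sqrt (1 + ‖F n‖^2) : ℝ) : ℂ))⁻¹ := by
    intro n
    have h1 : (0 : ℝ) ≤ 1 + ‖F n‖^2 := by positivity
    have h2 : g n = (Real.sqrt (1 + ‖F n‖^2))⁻¹ := by
      rw [hg, Real.sqrt_eq_rpow, ← Real.rpow_neg h1]
    rw [h2, Complex.ofReal_inv]
  have hCR : ((∏ j ∈ Finset.range (2 * d + 1), g ((j : ℤ) - d) : ℝ) : ℂ) = C := by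
    rw [Complex.ofReal_prod, hC]
    exact Finset.prod_congr rfl fun j _ => hterm _
  -- the integrand
  have h_integrand : ∀ θ : ℝ,
      (nlftMat F d (Complex.exp (Complex.I * θ))) 0 0
        = C * ev θ (Pmat F d (2 * d + 1) 0 0) := by
    intro θ
    rw [nlftMat, prod_eq F d θ (2 * d + 1)]
    rw [Matrix.smul_apply, Matrix.map_apply, smul_eq_mul, hC]
  have ha0 : (Pmat F d (2 * d + 1) 0 0).coeff 0 = 1 := (Pmat_inv F d (2 * d + 1)).1.1
  have hint : (∫ θ in (0:ℝ)..(2 * Real.pi),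
      (nlftMat F d (Complex.exp (Complex.I * θ))) 0 0) = C * (2 * Real.pi) := by
    simp_rw [h_integrand]
    rw [intervalIntegral.integral_const_mul, integral_ev, ha0, mul_one]
  constructor
  · rw [hint, htp, hIcc, hCR]
    have hπ : ((Real.pi : ℂ)) ≠ 0 := by
      exact_mod_cast Real.pi_ne_zero
    field_simp
  · rw [htp]
    exact Finset.prod_pos fun j _ => hg_pos j
end

section
/- For every z ∈ A_r one has |b(z)·b*(z)| ≤ 1−η; consequently 1 − b(z)·b*(z) ≠ 0, the principal logarithm satisfies |Log(1 − b(z)·b*(z))| ≤ |log η|, and for z ∈ T, (1/2)·Log(1 − b(z)·b*(z)) = log√(1−|b(z)|²). In other words, z ↦ (1/2)·Log(1 − b(z)·b*(z)) is an analytic extension of log√(1−|b|²) from T to the annulus A_r, pointwise bounded by (1/2)·|log η|. -/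
open scoped BigOperators

/-- Evaluation of the Laurent polynomial `b(z) = ∑_{j=−d}^{d} c_j z^j`. -/
noncomputable def laurentEval (c : ℤ → ℂ) (d : ℕ) (z : ℂ) : ℂ :=
  ∑ j ∈ Finset.Icc (-(d : ℤ)) (d : ℤ), c j * z ^ j

/-- Evaluation of `b*(z) = ∑_{j=−d}^{d} conj(c_j) z^{−j}`. -/
noncomputable def laurentStarEval (c : ℤ → ℂ) (d : ℕ) (z : ℂ) : ℂ :=
  ∑ j ∈ Finset.Icc (-(d : ℤ)) (d : ℤ), (starRingEnd ℂ) (c j) * z ^ (-j)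

lemma sum_shift_pos (a : ℤ → ℂ) (d : ℕ) {z : ℂ} (hz : z ≠ 0) :
    ∑ j ∈ Finset.Icc (-(d : ℤ)) (d : ℤ), a j * z ^ ((d : ℤ) + j).toNat
      = z ^ d * ∑ j ∈ Finset.Icc (-(d : ℤ)) (d : ℤ), a j * z ^ j := by
  rw [Finset.mul_sum]
  refine Finset.sum_congr rfl fun j hj => ?_
  obtain ⟨h1, h2⟩ := Finset.mem_Icc.mp hj
  have hnn : (0 : ℤ) ≤ (d : ℤ) + j := by linarith
  have h3 : (z : ℂ) ^ ((d : ℤ) + j).toNat = z ^ ((d : ℤ) + j) := by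
    rw [← zpow_natCast, Int.toNat_of_nonneg hnn]
  rw [h3, zpow_add₀ hz, zpow_natCast]
  ring

lemma sum_shift_neg (a : ℤ → ℂ) (d : ℕ) {z : ℂ} (hz : z ≠ 0) :
    ∑ j ∈ Finset.Icc (-(d : ℤ)) (d : ℤ), a j * z ^ ((d : ℤ) - j).toNat
      = z ^ d * ∑ j ∈ Finset.Icc (-(d : ℤ)) (d : ℤ), a j * z ^ (-j) := by
  rw [Finset.mul_sum]
  refine Finset.sum_congr rfl fun j hj => ?_
  obtain ⟨h1, h2⟩ := Finset.mem_Icc.mp hj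
  have hnn : (0 : ℤ) ≤ (d : ℤ) - j := by linarith
  have h3 : (z : ℂ) ^ ((d : ℤ) - j).toNat = z ^ ((d : ℤ) - j) := by
    rw [← zpow_natCast, Int.toNat_of_nonneg hnn]
  rw [h3, sub_eq_add_neg, zpow_add₀ hz, zpow_natCast]
  ring

lemma laurentEval_inv (c : ℤ → ℂ) (d : ℕ) (z : ℂ) :
    laurentEval c d z⁻¹ = laurentEval (fun j => c (-j)) d z := by
  unfold laurentEval
  refine Finset.sum_equiv (Equiv.neg ℤ) (fun i => ?_) (fun i hi => ?_)
  · simp [Finset.mem_Icc]; omega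
  · simp [inv_zpow, zpow_neg]

lemma laurentStarEval_inv (c : ℤ → ℂ) (d : ℕ) (z : ℂ) :
    laurentStarEval c d z⁻¹ = laurentStarEval (fun j => c (-j)) d z := by
  unfold laurentStarEval
  refine Finset.sum_equiv (Equiv.neg ℤ) (fun i => ?_) (fun i hi => ?_)
  · simp [Finset.mem_Icc]; omega
  · simp [inv_zpow, zpow_neg]

lemma star_circle (c : ℤ → ℂ) (d : ℕ) {z : ℂ} (hz : ‖z‖ = 1) :
    laurentStarEval c d z = (starRingEnd ℂ) (laurentEval c d z) := by
  have h1 : z * (starRingEnd ℂ) z = 1 := by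
    rw [Complex.mul_conj, Complex.normSq_eq_norm_sq, hz]; norm_num
  have hconj : (starRingEnd ℂ) z = z⁻¹ :=
    eq_inv_of_mul_eq_one_left (by rw [mul_comm] at h1; exact h1)
  unfold laurentEval laurentStarEval
  rw [map_sum]
  refine Finset.sum_congr rfl fun j hj => ?_
  rw [map_mul, map_zpow₀, hconj, inv_zpow, ← zpow_neg]

lemma norm_log_one_sub_le {u : ℂ} (hu : ‖u‖ < 1) :
    ‖Complex.log (1 - u)‖ ≤ -Real.log (1 - ‖u‖) := by
  have hu' : ‖u‖ < 1 := hu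
  have hs := Complex.hasSum_taylorSeries_neg_log hu'
  have hr0 : |‖u‖| < 1 := by rw [abs_of_nonneg (norm_nonneg _)]; exact hu'
  have hg1 := Real.hasSum_pow_div_log_of_abs_lt_one hr0
  have hg : HasSum (fun n : ℕ => ‖u‖ ^ n / n) (-Real.log (1 - ‖u‖)) := by
    have h0 : ∑ i ∈ Finset.range 1, ‖u‖ ^ i / (i : ℝ) = 0 := by simp
    refine (hasSum_nat_add_iff' 1).mp ?_
    rw [h0, sub_zero]
    convert hg1 using 2 with n
    · rfl
    push_cast; ring
  have hnorm : ∀ n : ℕ, ‖u ^ n / (n : ℂ)‖ = ‖u‖ ^ n / n := by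
    intro n; rw [norm_div, norm_pow, Complex.norm_natCast]
  have hsum : Summable fun n : ℕ => ‖u ^ n / (n : ℂ)‖ :=
    hg.summable.congr fun n => (hnorm n).symm
  calc ‖Complex.log (1 - u)‖ = ‖-Complex.log (1 - u)‖ := by
        rw [norm_neg]
    _ = ‖∑' n : ℕ, u ^ n / (n : ℂ)‖ := by rw [hs.tsum_eq]
    _ ≤ ∑' n : ℕ, ‖u ^ n / (n : ℂ)‖ := norm_tsum_le_tsum_norm hsum
    _ = -Real.log (1 - ‖u‖) := (tsum_congr hnorm).trans hg.tsum_eq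

lemma main_half (d : ℕ) (hd : 1 ≤ d) (η : ℝ) (hη1 : 0 < 1 - η)
    (c : ℤ → ℂ)
    (hb : ∀ z : ℂ, ‖z‖ = 1 → ‖laurentEval c d z‖ ≤ 1 - η)
    (r : ℝ) (hr : 1 < r) (hrd : r ^ (2 * d) = (1 - η)⁻¹) :
    ∀ z : ℂ, r⁻¹ < ‖z‖ → ‖z‖ ≤ 1 →
      ‖laurentEval c d z * laurentStarEval c d z‖ ≤ 1 - η := by
  set F : ℂ → ℂ := fun w =>
    (∑ j ∈ Finset.Icc (-(d : ℤ)) (d : ℤ), c j * w ^ ((d : ℤ) + j).toNat) *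
    (∑ j ∈ Finset.Icc (-(d : ℤ)) (d : ℤ), (starRingEnd ℂ) (c j) * w ^ ((d : ℤ) - j).toNat)
    with hF
  have hFdiff : Differentiable ℂ F := by
    apply Differentiable.mul
    · exact Differentiable.fun_sum fun j _ => (differentiable_pow _).const_mul _
    · exact Differentiable.fun_sum fun j _ => (differentiable_pow _).const_mul _
  have hFeq : ∀ w : ℂ, w ≠ 0 →
      F w = (w ^ d * laurentEval c d w) * (w ^ d * laurentStarEval c d w) := by
    intro w hw
    rw [hF]
    simp only
    rw [sum_shift_pos c d hw, sum_shift_neg (fun j => (starRingEnd ℂ) (c j)) d hw]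
    rfl
  have hcirc : ∀ w : ℂ, ‖w‖ = 1 → ‖F w‖ ≤ (1 - η) ^ 2 := by
    intro w hw
    have hw0 : w ≠ 0 := by intro h; rw [h] at hw; simp at hw
    rw [hFeq w hw0, star_circle c d hw]
    rw [norm_mul, norm_mul, norm_mul, norm_pow, hw, Complex.norm_conj, one_pow]
    have hbw := hb w hw
    have h0 := norm_nonneg (laurentEval c d w)
    nlinarith
  have hmax : ∀ w : ℂ, ‖w‖ ≤ 1 → ‖F w‖ ≤ (1 - η) ^ 2 := by
    intro w hw
    have hcl : w ∈ closure (Metric.ball (0 : ℂ) 1) := by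
      rw [closure_ball (0 : ℂ) one_ne_zero, Metric.mem_closedBall, dist_zero_right]
      exact hw
    have := Complex.norm_le_of_forall_mem_frontier_norm_le (U := Metric.ball (0 : ℂ) 1)
      Metric.isBounded_ball hFdiff.diffContOnCl (C := (1 - η) ^ 2) ?_ hcl
    · exact this
    · intro ζ hζ
      rw [frontier_ball (0 : ℂ) one_ne_zero] at hζ
      have hζ1 : ‖ζ‖ = 1 := by
        have := mem_sphere_zero_iff_norm.mp hζ
        exact this
      exact hcirc ζ hζ1
  intro z hz1 hz2
  have hr0 : (0 : ℝ) < r := lt_trans one_pos hr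
  have hz0 : z ≠ 0 := by
    intro h; rw [h] at hz1; simp at hz1; linarith
  have hFz := hmax z hz2
  rw [hFeq z hz0, norm_mul, norm_mul, norm_mul, norm_pow] at hFz
  have hpow : (1 - η) < ‖z‖ ^ (2 * d) := by
    have h2d : 2 * d ≠ 0 := by omega
    have h1 : (r⁻¹) ^ (2 * d) < ‖z‖ ^ (2 * d) :=
      pow_lt_pow_left₀ hz1 (inv_nonneg.mpr hr0.le) h2d
    rwa [inv_pow, hrd, inv_inv] at h1
  set X := ‖laurentEval c d z * laurentStarEval c d z‖ with hX
  have hXeq : X = ‖laurentEval c d z‖ * ‖laurentStarEval c d z‖ :=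
    norm_mul _ _
  have hX0 : 0 ≤ X := norm_nonneg _
  have key : ‖z‖ ^ (2 * d) * X ≤ (1 - η) ^ 2 := by
    rw [hXeq]
    calc ‖z‖ ^ (2 * d) *
          (‖laurentEval c d z‖ * ‖laurentStarEval c d z‖)
        = ‖z‖ ^ d * ‖laurentEval c d z‖ *
          (‖z‖ ^ d * ‖laurentStarEval c d z‖) := by
          rw [two_mul, pow_add]; ring
      _ ≤ (1 - η) ^ 2 := hFz
  have h3 : (1 - η) * X ≤ (1 - η) * (1 - η) := by
    calc (1 - η) * X ≤ ‖z‖ ^ (2 * d) * X :=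
          mul_le_mul_of_nonneg_right hpow.le hX0
      _ ≤ (1 - η) ^ 2 := key
      _ = (1 - η) * (1 - η) := sq (1 - η)
  exact le_of_mul_le_mul_left h3 hη1

/-- For all `z` in the annulus `A_r = {r⁻¹ < |z| < r}` one has
`|b(z)b*(z)| ≤ 1−η`, hence `1 − b(z)b*(z) ≠ 0` and `|Log(1 − b(z)b*(z))| ≤ |log η|`;
moreover on the unit circle `(1/2)·Log(1 − b(z)b*(z)) = log √(1−|b(z)|²)`. -/
theorem stmt5 (d : ℕ) (hd : 1 ≤ d) (η : ℝ) (hη : 0 < η) (hη' : η < 1/2)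
    (c : ℤ → ℂ)
    (hb : ∀ z : ℂ, ‖z‖ = 1 → ‖laurentEval c d z‖ ≤ 1 - η)
    (r : ℝ) (hr : 1 < r) (hrd : r ^ (2 * d) = (1 - η)⁻¹) :
    (∀ z : ℂ, r⁻¹ < ‖z‖ → ‖z‖ < r →
      ‖laurentEval c d z * laurentStarEval c d z‖ ≤ 1 - η ∧
      1 - laurentEval c d z * laurentStarEval c d z ≠ 0 ∧
      ‖Complex.log (1 - laurentEval c d z * laurentStarEval c d z)‖
        ≤ |Real.log η|) ∧
    (∀ z : ℂ, ‖z‖ = 1 →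
      (1/2 : ℂ) * Complex.log (1 - laurentEval c d z * laurentStarEval c d z)
        = (Real.log (Real.sqrt (1 - ‖laurentEval c d z‖^2)) : ℂ)) := by
  have hη1 : 0 < 1 - η := by linarith
  constructor
  · intro z hz1 hz2
    have habs : ‖laurentEval c d z * laurentStarEval c d z‖ ≤ 1 - η := by
      rcases le_or_gt (‖z‖) 1 with h | h
      · exact main_half d hd η hη1 c hb r hr hrd z hz1 h
      · have hz0 : z ≠ 0 := by intro hzz; rw [hzz] at h; simp at h; linarith
        have hzpos : 0 < ‖z‖ := norm_pos_iff.mpr hz0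
        have hb' : ∀ w : ℂ, ‖w‖ = 1 →
            ‖laurentEval (fun j => c (-j)) d w‖ ≤ 1 - η := by
          intro w hw
          rw [← laurentEval_inv]
          exact hb w⁻¹ (by rw [norm_inv, hw, inv_one])
        have h1 : r⁻¹ < ‖z⁻¹‖ := by
          rw [norm_inv]
          exact inv_strictAnti₀ hzpos hz2
        have h2 : ‖z⁻¹‖ ≤ 1 := by
          rw [norm_inv]
          exact inv_le_one_of_one_le₀ h.le
        have h3 := main_half d hd η hη1 (fun j => c (-j)) hb' r hr hrd z⁻¹ h1 h2
        rw [← laurentEval_inv c d z⁻¹, ← laurentStarEval_inv c d z⁻¹, inv_inv] at h3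
        exact h3
    refine ⟨habs, ?_, ?_⟩
    · intro hcon
      have heq : laurentEval c d z * laurentStarEval c d z = 1 := (sub_eq_zero.mp hcon).symm
      rw [heq] at habs
      simp at habs
      linarith
    · have hlt : ‖laurentEval c d z * laurentStarEval c d z‖ < 1 :=
        lt_of_le_of_lt habs (by linarith)
      have hlog := norm_log_one_sub_le hlt
      have hmono : Real.log η ≤
          Real.log (1 - ‖laurentEval c d z * laurentStarEval c d z‖) :=
        Real.log_le_log hη (by linarith)
      have habslog : |Real.log η| = -Real.log η :=
        abs_of_neg (Real.log_neg hη (by linarith))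
      linarith
  · intro z hz
    have hstar := star_circle c d hz
    have hb1 := hb z hz
    have hb0 := norm_nonneg (laurentEval c d z)
    set x := ‖laurentEval c d z‖ with hx
    have ht : 0 < 1 - x ^ 2 := by nlinarith
    have hmc : (1 : ℂ) - laurentEval c d z * laurentStarEval c d z = ((1 - x ^ 2 : ℝ) : ℂ) := by
      rw [hstar, Complex.mul_conj, Complex.normSq_eq_norm_sq, ← hx]
      push_cast; ring
    rw [hmc, ← Complex.ofReal_log ht.le, Real.log_sqrt ht.le]
    push_cast; ring
end

section
/- Let N be an even positive integer with N > 2d/η. Then: (i) |r_j| ≤ (1/2)·r^{−|j|}·|log η| for every j ∈ ℤ; (ii) |r_j − r̂_j| ≤ 2·r^{j−N}·|log η| for every integer 0 ≤ j ≤ N/2. -/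
open scoped BigOperators

/-- The `j`-th Fourier coefficient of a function `u` on the unit circle:
`(1/2π) ∫₀^{2π} e^{−ijθ} u(e^{iθ}) dθ`. -/
noncomputable def circleFourierCoeff (u : ℂ → ℂ) (j : ℤ) : ℂ :=
  (1 / (2 * Real.pi) : ℂ) *
    ∫ θ in (0:ℝ)..(2 * Real.pi),
      (Complex.exp (Complex.I * θ)) ^ (-j) * u (Complex.exp (Complex.I * θ))

/-- The discrete Fourier transform on the `N`-th roots of unity:
`F^N(u)(j) = (1/N) ∑_{ℓ=0}^{N−1} z_ℓ^{−j} u(z_ℓ)` with `z_ℓ = e^{2πiℓ/N}`. -/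
noncomputable def discreteFourier (u : ℂ → ℂ) (N : ℕ) (j : ℤ) : ℂ :=
  (N : ℂ)⁻¹ * ∑ ℓ ∈ Finset.range N,
    (Complex.exp (2 * Real.pi * Complex.I * ℓ / N)) ^ (-j) *
      u (Complex.exp (2 * Real.pi * Complex.I * ℓ / N))

/-- The function `z ↦ log √(1 − |b(z)|²)` (as a complex-valued function). -/
noncomputable def logAbsB (c : ℤ → ℂ) (d : ℕ) (z : ℂ) : ℂ :=
  (Real.log (Real.sqrt (1 - ‖laurentEval c d z‖^2)) : ℂ)

private lemma st6_epow (θ : ℝ) (m : ℤ) :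
    (Complex.exp (Complex.I * θ)) ^ m = Complex.exp (Complex.I * m * θ) := by
  rw [show (Complex.I * m * θ : ℂ) = (m : ℂ) * (Complex.I * θ) by ring, Complex.exp_int_mul]

private lemma st6_abs_eI (θ : ℝ) : ‖Complex.exp (Complex.I * θ)‖ = 1 := by
  rw [Complex.norm_exp]; simp

private lemma st6_cont_epow (m : ℤ) : Continuous fun θ : ℝ => (Complex.exp (Complex.I * θ)) ^ m := by
  simp only [st6_epow]
  exact Complex.continuous_exp.comp (continuous_const.mul Complex.continuous_ofReal)

private lemma st6_integral_exp_int (m : ℤ) :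
    ∫ θ in (0:ℝ)..(2*Real.pi), Complex.exp (Complex.I * m * θ) =
      if m = 0 then (2*Real.pi : ℂ) else 0 := by
  rcases eq_or_ne m 0 with h | h
  · subst h
    simp
  · rw [if_neg h]
    have hc : (Complex.I * m : ℂ) ≠ 0 :=
      mul_ne_zero Complex.I_ne_zero (by exact_mod_cast Int.cast_ne_zero.mpr h)
    rw [integral_exp_mul_complex hc]
    have h1 : Complex.exp (Complex.I * m * ((2*Real.pi : ℝ) : ℂ)) = 1 := by
      rw [show (Complex.I * m * ((2*Real.pi : ℝ) : ℂ)) = (m : ℂ) * (2 * Real.pi * Complex.I) by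
        push_cast; ring]
      exact Complex.exp_int_mul_two_pi_mul_I m
    rw [h1]
    simp

private lemma st6_cfc_congr {u v : ℂ → ℂ} (h : ∀ z : ℂ, ‖z‖ = 1 → u z = v z) (j : ℤ) :
    circleFourierCoeff u j = circleFourierCoeff v j := by
  unfold circleFourierCoeff
  congr 1
  refine intervalIntegral.integral_congr fun θ _ => ?_
  rw [h _ (st6_abs_eI θ)]

private lemma st6_cfc_rep {M : ℕ} {a : ℤ → ℂ} {u : ℂ → ℂ}
    (hu : ∀ z : ℂ, ‖z‖ = 1 → u z = ∑ m ∈ Finset.Icc (-(M:ℤ)) (M:ℤ), a m * z ^ m)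
    (j : ℤ) :
    circleFourierCoeff u j = if j ∈ Finset.Icc (-(M:ℤ)) (M:ℤ) then a j else 0 := by
  unfold circleFourierCoeff
  have key : ∀ θ : ℝ, (Complex.exp (Complex.I * θ)) ^ (-j) * u (Complex.exp (Complex.I * θ))
      = ∑ m ∈ Finset.Icc (-(M:ℤ)) (M:ℤ), a m * Complex.exp (Complex.I * ((m - j : ℤ) : ℂ) * θ) := by
    intro θ
    rw [hu _ (st6_abs_eI θ), Finset.mul_sum]
    refine Finset.sum_congr rfl fun m _ => ?_
    rw [st6_epow, st6_epow, show (Complex.exp (Complex.I * (-j : ℤ) * θ)) * (a m * Complex.exp (Complex.I * (m : ℤ) * θ))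
        = a m * (Complex.exp (Complex.I * (-j : ℤ) * θ) * Complex.exp (Complex.I * (m : ℤ) * θ)) by ring,
      ← Complex.exp_add]
    congr 2
    push_cast
    ring
  simp only [key]
  have hint : ∀ m ∈ Finset.Icc (-(M:ℤ)) (M:ℤ), IntervalIntegrable
      (fun θ : ℝ => a m * Complex.exp (Complex.I * ((m - j : ℤ) : ℂ) * θ))
      MeasureTheory.volume 0 (2*Real.pi) :=
    fun m _ => (continuous_const.mul (by fun_prop)).intervalIntegrable _ _
  rw [intervalIntegral.integral_finset_sum hint]
  have h2 : ∀ m ∈ Finset.Icc (-(M:ℤ)) (M:ℤ),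
      (∫ θ in (0:ℝ)..(2*Real.pi), a m * Complex.exp (Complex.I * ((m - j : ℤ) : ℂ) * θ))
        = if m = j then a m * (2*Real.pi : ℂ) else 0 := by
    intro m _
    rw [intervalIntegral.integral_const_mul, st6_integral_exp_int (m - j)]
    simp only [sub_eq_zero]
    split_ifs <;> simp
  rw [Finset.sum_congr rfl h2, Finset.sum_ite_eq' (Finset.Icc (-(M:ℤ)) (M:ℤ)) j
    (fun m => a m * (2*Real.pi : ℂ))]
  have hπ : ((2*Real.pi : ℝ) : ℂ) ≠ 0 := by
    exact_mod_cast (by positivity : (2*Real.pi : ℝ) ≠ 0)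
  split_ifs
  · have hπ' : ((Real.pi : ℝ) : ℂ) ≠ 0 := Complex.ofReal_ne_zero.mpr Real.pi_ne_zero
    field_simp
  · simp

private lemma st6_root_sum {N : ℕ} (hN : 0 < N) (p : ℤ) :
    ∑ ℓ ∈ Finset.range N, (Complex.exp (2 * Real.pi * Complex.I * ℓ / N)) ^ p
      = if (N:ℤ) ∣ p then (N:ℂ) else 0 := by
  have hNC : (N:ℂ) ≠ 0 := Nat.cast_ne_zero.mpr hN.ne'
  have h2πI : ((2:ℂ) * Real.pi * Complex.I) ≠ 0 := by
    have : ((Real.pi : ℝ) : ℂ) ≠ 0 := Complex.ofReal_ne_zero.mpr Real.pi_ne_zero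
    exact mul_ne_zero (mul_ne_zero two_ne_zero this) Complex.I_ne_zero
  have hterm : ∀ ℓ : ℕ, (Complex.exp (2 * Real.pi * Complex.I * ℓ / N)) ^ p
      = (Complex.exp (2 * Real.pi * Complex.I * p / N)) ^ (ℓ : ℕ) := by
    intro ℓ
    rw [← Complex.exp_int_mul, ← Complex.exp_nat_mul]
    congr 1
    push_cast
    ring
  simp only [hterm]
  by_cases h : (N:ℤ) ∣ p
  · obtain ⟨t, ht⟩ := h
    have hζ : Complex.exp (2 * Real.pi * Complex.I * p / N) = 1 := by
      rw [Complex.exp_eq_one_iff]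
      refine ⟨t, ?_⟩
      rw [ht]
      push_cast
      field_simp
      skip
    have hdvd : (N:ℤ) ∣ p := ⟨t, ht⟩
    simp [hζ, hdvd]
  · rw [if_neg h]
    have hζ1 : Complex.exp (2 * Real.pi * Complex.I * p / N) ≠ 1 := by
      rw [Ne, Complex.exp_eq_one_iff]
      rintro ⟨n, hn⟩
      apply h
      refine ⟨n, ?_⟩
      have hC : (p : ℂ) = (N : ℂ) * n := by
        field_simp at hn
        exact hn
      exact_mod_cast hC
    rw [geom_sum_eq hζ1]
    have hζN : Complex.exp (2 * Real.pi * Complex.I * p / N) ^ N = 1 := by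
      rw [← Complex.exp_nat_mul, Complex.exp_eq_one_iff]
      refine ⟨p, ?_⟩
      field_simp
      skip
    rw [hζN]
    simp

private lemma st6_node (ℓ N : ℕ) : (2*Real.pi*Complex.I*ℓ/N : ℂ) = Complex.I * ((2*Real.pi*ℓ/N : ℝ) : ℂ) := by
  push_cast
  ring

private lemma st6_abs_node (ℓ N : ℕ) :
    ‖Complex.exp (2*Real.pi*Complex.I*ℓ/N)‖ = 1 := by
  rw [st6_node, st6_abs_eI]

private lemma st6_dft_rep {M N : ℕ} (hN : 0 < N) {a : ℤ → ℂ} {u : ℂ → ℂ}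
    (hu : ∀ z : ℂ, ‖z‖ = 1 → u z = ∑ m ∈ Finset.Icc (-(M:ℤ)) (M:ℤ), a m * z ^ m)
    (j : ℤ) :
    discreteFourier u N j
      = ∑ m ∈ Finset.Icc (-(M:ℤ)) (M:ℤ), if (N:ℤ) ∣ (m - j) then a m else 0 := by
  unfold discreteFourier
  have hNC : (N:ℂ) ≠ 0 := Nat.cast_ne_zero.mpr hN.ne'
  have hne : ∀ ℓ : ℕ, (Complex.exp (2*Real.pi*Complex.I*ℓ/N) : ℂ) ≠ 0 := fun ℓ => Complex.exp_ne_zero _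
  have key : ∀ ℓ : ℕ,
      (Complex.exp (2*Real.pi*Complex.I*ℓ/N)) ^ (-j) * u (Complex.exp (2*Real.pi*Complex.I*ℓ/N))
      = ∑ m ∈ Finset.Icc (-(M:ℤ)) (M:ℤ), a m * (Complex.exp (2*Real.pi*Complex.I*ℓ/N)) ^ (m - j) := by
    intro ℓ
    rw [hu _ (st6_abs_node ℓ N), Finset.mul_sum]
    refine Finset.sum_congr rfl fun m _ => ?_
    rw [sub_eq_add_neg, zpow_add₀ (hne ℓ)]
    ring
  simp only [key]
  rw [Finset.sum_comm]
  rw [Finset.mul_sum]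
  refine Finset.sum_congr rfl fun m _ => ?_
  rw [← Finset.mul_sum, st6_root_sum hN (m - j)]
  split_ifs
  · field_simp
  · simp

private lemma st6_cfc_abs_le {u : ℂ → ℂ} {C : ℝ}
    (hu : Continuous fun θ : ℝ => u (Complex.exp (Complex.I * θ)))
    (hC : ∀ z : ℂ, ‖z‖ = 1 → ‖u z‖ ≤ C) (j : ℤ) :
    ‖circleFourierCoeff u j‖ ≤ C := by
  have hC0 : 0 ≤ C := le_trans (norm_nonneg _) (hC 1 (by simp))
  unfold circleFourierCoeff
  rw [norm_mul]
  have h1 : ‖(1/(2*Real.pi) : ℂ)‖ = 1/(2*Real.pi) := by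
    rw [norm_div, norm_one, norm_mul, Complex.norm_two, Complex.norm_real, Real.norm_eq_abs,
      abs_of_pos Real.pi_pos]
  have h2 : ‖∫ θ in (0:ℝ)..(2*Real.pi),
      (Complex.exp (Complex.I * θ)) ^ (-j) * u (Complex.exp (Complex.I * θ))‖ ≤ C * |2*Real.pi - 0| := by
    skip
    refine intervalIntegral.norm_integral_le_of_norm_le_const fun θ _ => ?_
    rw [norm_mul, norm_zpow, st6_abs_eI, one_zpow, one_mul]
    exact hC _ (st6_abs_eI θ)
  calc ‖(1/(2*Real.pi) : ℂ)‖ * ‖∫ θ in (0:ℝ)..(2*Real.pi),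
        (Complex.exp (Complex.I * θ)) ^ (-j) * u (Complex.exp (Complex.I * θ))‖
      ≤ (1/(2*Real.pi)) * (C * |2*Real.pi - 0|) := by
        rw [h1]
        exact mul_le_mul_of_nonneg_left h2 (by positivity)
    _ = C := by
        rw [sub_zero, abs_of_pos (by positivity : (0:ℝ) < 2*Real.pi)]
        field_simp
  
private lemma st6_cfc_sub {u v : ℂ → ℂ}
    (hu : Continuous fun θ : ℝ => u (Complex.exp (Complex.I * θ)))
    (hv : Continuous fun θ : ℝ => v (Complex.exp (Complex.I * θ))) (j : ℤ) :
    circleFourierCoeff (fun z => u z - v z) j = circleFourierCoeff u j - circleFourierCoeff v j := by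
  unfold circleFourierCoeff
  rw [← mul_sub]
  congr 1
  have hiu : IntervalIntegrable (fun θ : ℝ => (Complex.exp (Complex.I * θ)) ^ (-j) * u (Complex.exp (Complex.I * θ))) MeasureTheory.volume 0 (2*Real.pi) :=
    ((st6_cont_epow (-j)).mul hu).intervalIntegrable _ _
  have hiv : IntervalIntegrable (fun θ : ℝ => (Complex.exp (Complex.I * θ)) ^ (-j) * v (Complex.exp (Complex.I * θ))) MeasureTheory.volume 0 (2*Real.pi) :=
    ((st6_cont_epow (-j)).mul hv).intervalIntegrable _ _
  rw [← intervalIntegral.integral_sub hiu hiv]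
  refine intervalIntegral.integral_congr fun θ _ => ?_
  simp only
  ring

private lemma st6_dft_sub_abs_le {u v : ℂ → ℂ} {C : ℝ} {N : ℕ} (hN : 0 < N)
    (h : ∀ z : ℂ, ‖z‖ = 1 → ‖u z - v z‖ ≤ C) (j : ℤ) :
    ‖discreteFourier u N j - discreteFourier v N j‖ ≤ C := by
  have hC0 : 0 ≤ C := le_trans (norm_nonneg _) (h 1 (by simp))
  unfold discreteFourier
  rw [← mul_sub, ← Finset.sum_sub_distrib, norm_mul]
  have h1 : ‖(N:ℂ)⁻¹‖ = (N:ℝ)⁻¹ := by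
    rw [norm_inv, Complex.norm_natCast]
  have h2 : ‖∑ ℓ ∈ Finset.range N,
      ((Complex.exp (2*Real.pi*Complex.I*ℓ/N)) ^ (-j) * u (Complex.exp (2*Real.pi*Complex.I*ℓ/N))
      - (Complex.exp (2*Real.pi*Complex.I*ℓ/N)) ^ (-j) * v (Complex.exp (2*Real.pi*Complex.I*ℓ/N)))‖ ≤ N * C := by
    refine le_trans (norm_sum_le _ _) ?_
    have : ∀ ℓ ∈ Finset.range N, ‖(Complex.exp (2*Real.pi*Complex.I*ℓ/N)) ^ (-j) * u (Complex.exp (2*Real.pi*Complex.I*ℓ/N))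
        - (Complex.exp (2*Real.pi*Complex.I*ℓ/N)) ^ (-j) * v (Complex.exp (2*Real.pi*Complex.I*ℓ/N))‖ ≤ C := by
      intro ℓ _
      rw [← mul_sub, norm_mul, norm_zpow, st6_abs_node, one_zpow, one_mul]
      exact h _ (st6_abs_node ℓ N)
    refine le_trans (Finset.sum_le_card_nsmul _ _ C this) ?_
    simp [Finset.card_range, nsmul_eq_mul]
  calc ‖(N:ℂ)⁻¹‖ * ‖_‖ ≤ (N:ℝ)⁻¹ * (N * C) := by
        rw [h1]
        exact mul_le_mul_of_nonneg_left h2 (by positivity)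
    _ = C := by field_simp

private lemma st6_cfc_smul_sum {K : ℕ} {w : ℕ → ℂ} {u : ℕ → ℂ → ℂ}
    (hu : ∀ k, Continuous fun θ : ℝ => u k (Complex.exp (Complex.I * θ))) (j : ℤ) :
    circleFourierCoeff (fun z => ∑ k ∈ Finset.Icc 1 K, w k * u k z) j
      = ∑ k ∈ Finset.Icc 1 K, w k * circleFourierCoeff (u k) j := by
  unfold circleFourierCoeff
  have key : ∀ θ : ℝ, (Complex.exp (Complex.I * θ)) ^ (-j) * (∑ k ∈ Finset.Icc 1 K, w k * u k (Complex.exp (Complex.I * θ)))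
      = ∑ k ∈ Finset.Icc 1 K, w k * ((Complex.exp (Complex.I * θ)) ^ (-j) * u k (Complex.exp (Complex.I * θ))) := by
    intro θ
    rw [Finset.mul_sum]
    exact Finset.sum_congr rfl fun k _ => by ring
  simp only [key]
  rw [intervalIntegral.integral_finset_sum (fun k _ => (by exact
    (continuous_const.mul ((st6_cont_epow (-j)).mul (hu k))).intervalIntegrable _ _ : IntervalIntegrable (fun θ : ℝ => w k * ((Complex.exp (Complex.I * θ)) ^ (-j) * u k (Complex.exp (Complex.I * θ)))) MeasureTheory.volume 0 (2*Real.pi)))]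
  rw [Finset.mul_sum]
  refine Finset.sum_congr rfl fun k _ => ?_
  rw [intervalIntegral.integral_const_mul]
  ring

private lemma st6_dft_smul_sum {K N : ℕ} {w : ℕ → ℂ} {u : ℕ → ℂ → ℂ} (j : ℤ) :
    discreteFourier (fun z => ∑ k ∈ Finset.Icc 1 K, w k * u k z) N j
      = ∑ k ∈ Finset.Icc 1 K, w k * discreteFourier (u k) N j := by
  unfold discreteFourier
  have key : ∀ ℓ : ℕ, (Complex.exp (2*Real.pi*Complex.I*ℓ/N)) ^ (-j) * (∑ k ∈ Finset.Icc 1 K, w k * u k (Complex.exp (2*Real.pi*Complex.I*ℓ/N)))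
      = ∑ k ∈ Finset.Icc 1 K, w k * ((Complex.exp (2*Real.pi*Complex.I*ℓ/N)) ^ (-j) * u k (Complex.exp (2*Real.pi*Complex.I*ℓ/N))) := by
    intro ℓ
    rw [Finset.mul_sum]
    exact Finset.sum_congr rfl fun k _ => by ring
  simp only [key, Finset.mul_sum]
  rw [Finset.sum_comm]
  exact Finset.sum_congr rfl fun k _ => Finset.sum_congr rfl fun ℓ _ => by ring

private def St6Rep (M : ℕ) (u : ℂ → ℂ) : Prop :=
  ∃ a : ℤ → ℂ, (∀ m : ℤ, m ∉ Finset.Icc (-(M:ℤ)) (M:ℤ) → a m = 0) ∧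
    ∀ z : ℂ, ‖z‖ = 1 → u z = ∑ m ∈ Finset.Icc (-(M:ℤ)) (M:ℤ), a m * z ^ m

private lemma st6_ne_zero {z : ℂ} (hz : ‖z‖ = 1) : z ≠ 0 := by
  intro h
  rw [h] at hz
  simp at hz

private lemma St6Rep.mul {M M' : ℕ} {u v : ℂ → ℂ} (h : St6Rep M u) (h' : St6Rep M' v) :
    St6Rep (M + M') (fun z => u z * v z) := by
  classical
  obtain ⟨a, ha0, ha⟩ := h
  obtain ⟨b, hb0, hb⟩ := h'
  set s := Finset.Icc (-(M:ℤ)) (M:ℤ)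
  set t := Finset.Icc (-(M':ℤ)) (M':ℤ)
  set S := Finset.Icc (-((M+M' : ℕ):ℤ)) ((M+M' : ℕ):ℤ)
  have hmaps : ∀ q ∈ s ×ˢ t, q.1 + q.2 ∈ S := by
    rintro ⟨m, n⟩ hq
    rw [Finset.mem_product] at hq
    obtain ⟨h1, h2⟩ := hq
    rw [Finset.mem_Icc] at h1 h2 ⊢
    push_cast
    omega
  refine ⟨fun p => ∑ q ∈ (s ×ˢ t).filter (fun q => q.1 + q.2 = p), a q.1 * b q.2, ?_, ?_⟩
  · intro p hp
    dsimp only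
    rw [Finset.filter_false_of_mem, Finset.sum_empty]
    intro q hq hqp
    exact hp (hqp ▸ hmaps q hq)
  · intro z hz
    have hz0 : z ≠ 0 := st6_ne_zero hz
    dsimp only
    rw [ha z hz, hb z hz, Finset.sum_mul_sum]
    simp only [Finset.sum_mul]
    have : ∀ p ∈ S, ∀ q ∈ (s ×ˢ t).filter (fun q => q.1 + q.2 = p),
        a q.1 * b q.2 * z ^ p = a q.1 * b q.2 * z ^ (q.1 + q.2) := by
      intro p _ q hq
      rw [(Finset.mem_filter.mp hq).2]
    rw [Finset.sum_congr rfl (fun p hp => Finset.sum_congr rfl (this p hp))]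
    rw [Finset.sum_fiberwise_of_maps_to hmaps (fun q => a q.1 * b q.2 * z ^ (q.1 + q.2))]
    rw [Finset.sum_product]
    exact Finset.sum_congr rfl fun m _ => Finset.sum_congr rfl fun n _ => by
      rw [zpow_add₀ hz0]
      ring

private lemma st6_rep_laurent (c : ℤ → ℂ) (d : ℕ) : St6Rep d (laurentEval c d) := by
  classical
  refine ⟨fun m => if m ∈ Finset.Icc (-(d:ℤ)) (d:ℤ) then c m else 0,
    fun m hm => if_neg hm, fun z _ => ?_⟩
  unfold laurentEval
  exact Finset.sum_congr rfl fun m hm => by simp [hm]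

private lemma st6_rep_conj (c : ℤ → ℂ) (d : ℕ) :
    St6Rep d (fun z => (starRingEnd ℂ) (laurentEval c d z)) := by
  classical
  refine ⟨fun m => if m ∈ Finset.Icc (-(d:ℤ)) (d:ℤ) then (starRingEnd ℂ) (c (-m)) else 0,
    fun m hm => if_neg hm, fun z hz => ?_⟩
  have hz0 : z ≠ 0 := st6_ne_zero hz
  have hconj : (starRingEnd ℂ) z = z⁻¹ := by
    have h1 : z * (starRingEnd ℂ) z = 1 := by
      rw [Complex.mul_conj, Complex.normSq_eq_norm_sq, hz]
      norm_num
    field_simp at h1 ⊢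
    linear_combination h1
  dsimp only
  unfold laurentEval
  rw [map_sum]
  have hterm : ∀ m ∈ Finset.Icc (-(d:ℤ)) (d:ℤ),
      (starRingEnd ℂ) (c m * z ^ m) = (starRingEnd ℂ) (c m) * z ^ (-m) := by
    intro m _
    rw [map_mul, map_zpow₀, hconj, inv_zpow, ← zpow_neg]
  rw [Finset.sum_congr rfl hterm]
  refine Finset.sum_bij' (fun m _ => -m) (fun m _ => -m) ?_ ?_ ?_ ?_ ?_
  · intro m hm
    rw [Finset.mem_Icc] at hm ⊢
    omega
  · intro m hm
    rw [Finset.mem_Icc] at hm ⊢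
    omega
  · intro m _
    ring
  · intro m _
    ring
  · intro m hm
    have h2 : -m ∈ Finset.Icc (-(d:ℤ)) (d:ℤ) := by
      rw [Finset.mem_Icc] at hm ⊢
      omega
    rw [if_pos h2, neg_neg]

private noncomputable def st6g (c : ℤ → ℂ) (d : ℕ) (z : ℂ) : ℂ :=
  laurentEval c d z * (starRingEnd ℂ) (laurentEval c d z)

private lemma st6_rep_gpow (c : ℤ → ℂ) (d : ℕ) (k : ℕ) :
    St6Rep (2*d*k) (fun z => (st6g c d z) ^ k) := by
  unfold st6g
  induction k with
  | zero =>
    refine ⟨fun m => if m = 0 then 1 else 0, ?_, ?_⟩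
    · intro m hm
      dsimp only
      rw [if_neg]
      intro h
      subst h
      simp at hm
    · intro z _
      simp
  | succ k ih =>
    have hg : St6Rep (d + d) (fun z => laurentEval c d z * (starRingEnd ℂ) (laurentEval c d z)) :=
      (st6_rep_laurent c d).mul (st6_rep_conj c d)
    have := ih.mul hg
    have heq : (fun z => (laurentEval c d z * (starRingEnd ℂ) (laurentEval c d z)) ^ k *
        (laurentEval c d z * (starRingEnd ℂ) (laurentEval c d z)))
        = fun z => (laurentEval c d z * (starRingEnd ℂ) (laurentEval c d z)) ^ (k+1) :=
      funext fun z => (pow_succ _ k).symm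
    rw [heq] at this
    have hM : 2*d*k + (d + d) = 2*d*(k+1) := by ring
    rw [hM] at this
    exact this

private lemma st6_rep_continuous {M : ℕ} {a : ℤ → ℂ} {u : ℂ → ℂ}
    (ha : ∀ z : ℂ, ‖z‖ = 1 → u z = ∑ m ∈ Finset.Icc (-(M:ℤ)) (M:ℤ), a m * z ^ m) :
    Continuous fun θ : ℝ => u (Complex.exp (Complex.I * θ)) := by
  have : (fun θ : ℝ => u (Complex.exp (Complex.I * θ)))
      = fun θ : ℝ => ∑ m ∈ Finset.Icc (-(M:ℤ)) (M:ℤ), a m * (Complex.exp (Complex.I * θ)) ^ m :=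
    funext fun θ => ha _ (st6_abs_eI θ)
  rw [this]
  exact continuous_finset_sum _ fun m _ => continuous_const.mul (st6_cont_epow m)

private lemma st6_Icc_range (K : ℕ) (f : ℕ → ℝ) :
    ∑ k ∈ Finset.Icc 1 K, f k = ∑ n ∈ Finset.range K, f (n+1) := by
  rw [← Finset.Ico_add_one_right_eq_Icc, Finset.sum_Ico_eq_sum_range]
  simp [add_comm]

private lemma st6_geom_shift {x₀ : ℝ} (hx₀0 : 0 ≤ x₀) (hx₀ : x₀ < 1) (K : ℕ) :
    HasSum (fun i : ℕ => x₀^(i+K+1)) (x₀^(K+1)/(1-x₀)) := by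
  have h := (hasSum_geometric_of_lt_one hx₀0 hx₀).mul_left (x₀^(K+1))
  have heq : (fun i : ℕ => x₀^(K+1) * x₀^i) = fun i : ℕ => x₀^(i+K+1) :=
    funext fun i => by ring
  rw [heq] at h
  rw [div_eq_mul_inv]
  exact h

private lemma st6_log_tail {x x₀ : ℝ} (hx0 : 0 ≤ x) (hxx : x ≤ x₀) (hx₀ : x₀ < 1) (K : ℕ) :
    |Real.log (Real.sqrt (1 - x)) + ∑ k ∈ Finset.Icc 1 K, x^k/(2*k)| ≤ x₀^(K+1)/(1-x₀)/2 := by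
  have hx₀0 : 0 ≤ x₀ := le_trans hx0 hxx
  have hx1 : x < 1 := lt_of_le_of_lt hxx hx₀
  have hs : HasSum (fun n : ℕ => x^(n+1)/(n+1)) (-Real.log (1-x)) :=
    Real.hasSum_pow_div_log_of_abs_lt_one (by rw [abs_of_nonneg hx0]; exact hx1)
  have hsum : Summable (fun n : ℕ => x^(n+1)/(n+1)) := hs.summable
  have htailsum : Summable (fun i : ℕ => x^(i+K+1)/((i+K:ℕ)+1)) :=
    (summable_nat_add_iff (f := fun n : ℕ => x^(n+1)/(n+1)) K).mpr hsum
  have htail := Summable.sum_add_tsum_nat_add (f := fun n : ℕ => x^(n+1)/(n+1)) K hsum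
  rw [hs.tsum_eq] at htail
  have hIcc : ∑ k ∈ Finset.Icc 1 K, x^k/(2*k) = (1/2) * ∑ n ∈ Finset.range K, x^(n+1)/((n:ℕ)+1 : ℝ) := by
    rw [st6_Icc_range K (fun k => x^k/(2*(k:ℝ))), Finset.mul_sum]
    refine Finset.sum_congr rfl fun n _ => ?_
    have hn : ((n:ℝ)+1) ≠ 0 := by positivity
    push_cast
    field_simp
  have hlog : Real.log (Real.sqrt (1-x)) = (1/2) * Real.log (1-x) := by
    rw [Real.log_sqrt (by linarith)]
    ring
  rw [hlog, hIcc, ← mul_add, abs_mul]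
  have h1 : Real.log (1-x) + ∑ n ∈ Finset.range K, x^(n+1)/((n:ℕ)+1 : ℝ)
      = -∑' i : ℕ, x^(i+K+1)/((i+K:ℕ)+1) := by
    linarith [htail]
  rw [h1, abs_neg]
  have hT0 : 0 ≤ ∑' i : ℕ, x^(i+K+1)/((i+K:ℕ)+1) :=
    tsum_nonneg fun i => by positivity
  have hTle : ∑' i : ℕ, x^(i+K+1)/((i+K:ℕ)+1) ≤ x₀^(K+1)/(1-x₀) := by
    refine le_trans (Summable.tsum_le_tsum (fun i => ?_) htailsum (st6_geom_shift hx₀0 hx₀ K).summable)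
      (st6_geom_shift hx₀0 hx₀ K).tsum_eq.le
    have hp : x^(i+K+1) ≤ x₀^(i+K+1) := pow_le_pow_left₀ hx0 hxx _
    have hd : (1:ℝ) ≤ ((i+K:ℕ)+1 : ℝ) := le_add_of_nonneg_left (Nat.cast_nonneg _)
    exact le_trans (div_le_self (by positivity) hd) hp
  rw [abs_of_nonneg hT0]
  calc |1/2| * (∑' i : ℕ, x^(i+K+1)/((i+K:ℕ)+1)) ≤ |1/2| * (x₀^(K+1)/(1-x₀)) := by
        exact mul_le_mul_of_nonneg_left hTle (abs_nonneg _)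
    _ = x₀^(K+1)/(1-x₀)/2 := by rw [abs_of_pos (by norm_num : (0:ℝ) < 1/2)]; ring

private lemma st6_log_partial {y : ℝ} (h0 : 0 ≤ y) (h1 : y < 1) (K : ℕ) :
    ∑ k ∈ Finset.Icc 1 K, y^k/(k:ℝ) ≤ -Real.log (1-y) := by
  have hs : HasSum (fun n : ℕ => y^(n+1)/(n+1)) (-Real.log (1-y)) :=
    Real.hasSum_pow_div_log_of_abs_lt_one (by rw [abs_of_nonneg h0]; exact h1)
  have : ∑ k ∈ Finset.Icc 1 K, y^k/(k:ℝ) = ∑ n ∈ Finset.range K, y^(n+1)/((n:ℕ)+1 : ℝ) := by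
    rw [st6_Icc_range K (fun k => y^k/(k:ℝ))]
    refine Finset.sum_congr rfl fun n _ => ?_
    push_cast
    ring
  rw [this]
  exact sum_le_hasSum _ (fun i _ => by positivity) hs

private lemma st6_geom_partial {y : ℝ} (h0 : 0 ≤ y) (h1 : y < 1) (K : ℕ) :
    ∑ k ∈ Finset.Icc 1 K, y^k ≤ y/(1-y) := by
  have hs : HasSum (fun i : ℕ => y^(i+0+1)) (y^(0+1)/(1-y)) := st6_geom_shift h0 h1 0
  simp only [add_zero, zero_add, pow_one] at hs
  rw [st6_Icc_range K (fun k => y^k)]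
  exact sum_le_hasSum _ (fun i _ => by positivity) hs

private lemma st6_alias_sum {M N : ℕ} (hN : 0 < N) {a : ℤ → ℂ} {u : ℂ → ℂ}
    (hu : ∀ z : ℂ, ‖z‖ = 1 → u z = ∑ m ∈ Finset.Icc (-(M:ℤ)) (M:ℤ), a m * z ^ m)
    (j : ℤ) :
    discreteFourier u N j - circleFourierCoeff u j
      = ∑ m ∈ ((Finset.Icc (-(M:ℤ)) (M:ℤ)).filter (fun m => (N:ℤ) ∣ (m - j))).erase j, a m := by
  classical
  rw [st6_dft_rep hN hu j, st6_cfc_rep hu j, ← Finset.sum_filter]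
  set F := (Finset.Icc (-(M:ℤ)) (M:ℤ)).filter (fun m => (N:ℤ) ∣ (m - j)) with hF
  by_cases hj : j ∈ Finset.Icc (-(M:ℤ)) (M:ℤ)
  · have hjF : j ∈ F := Finset.mem_filter.mpr ⟨hj, by simp⟩
    rw [if_pos hj, ← Finset.add_sum_erase F a hjF]
    ring
  · have hjF : j ∉ F := fun h => hj (Finset.mem_filter.mp h).1
    rw [if_neg hj, Finset.erase_eq_of_notMem hjF, sub_zero]

private lemma st6_alias_empty {M N : ℕ} (j : ℤ)
    (hj0 : 0 ≤ j) (hM : (M:ℤ) < (N:ℤ) - j) :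
    ((Finset.Icc (-(M:ℤ)) (M:ℤ)).filter (fun m => (N:ℤ) ∣ (m - j))).erase j = ∅ := by
  classical
  rw [Finset.eq_empty_iff_forall_notMem]
  intro m hm
  obtain ⟨hmj, hmf⟩ := Finset.mem_erase.mp hm
  obtain ⟨hmI, hdvd⟩ := Finset.mem_filter.mp hmf
  obtain ⟨s, hs⟩ := hdvd
  rw [Finset.mem_Icc] at hmI
  have hN0 : (0:ℤ) ≤ N := by positivity
  rcases lt_trichotomy s 0 with h | h | h
  · have h1 : s ≤ -1 := by omega
    have h2 : (N:ℤ)*s ≤ (N:ℤ)*(-1) := mul_le_mul_of_nonneg_left h1 hN0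
    omega
  · subst h
    simp at hs
    omega
  · have h1 : (1:ℤ) ≤ s := by omega
    have h2 : (N:ℤ)*1 ≤ (N:ℤ)*s := mul_le_mul_of_nonneg_left h1 hN0
    omega

private lemma st6_alias_bound {M N : ℕ} (hN : 0 < N) {a : ℤ → ℂ} {C : ℝ}
    (haC : ∀ m : ℤ, ‖a m‖ ≤ C) (j : ℤ) (hj0 : 0 ≤ j) (hjN : 2*j ≤ (N:ℤ)) :
    ‖∑ m ∈ ((Finset.Icc (-(M:ℤ)) (M:ℤ)).filter (fun m => (N:ℤ) ∣ (m - j))).erase j, a m‖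
      ≤ (2*((M:ℝ)/(N:ℝ)) + 1) * C := by
  classical
  have hC0 : 0 ≤ C := le_trans (norm_nonneg _) (haC 0)
  have hNZ : (0:ℤ) < (N:ℤ) := by exact_mod_cast hN
  have hjltN : j < (N:ℤ) := by omega
  set S : ℤ := (M:ℤ) / (N:ℤ) with hSdef
  have hS0 : 0 ≤ S := Int.ediv_nonneg (by positivity) (by positivity)
  set E := ((Finset.Icc (-(M:ℤ)) (M:ℤ)).filter (fun m => (N:ℤ) ∣ (m - j))).erase j with hE
  have hsub : E ⊆ (((Finset.Icc (-(S+1)) S).erase 0).image (fun s => j + s*(N:ℤ))) := by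
    intro m hm
    obtain ⟨hmj, hmf⟩ := Finset.mem_erase.mp hm
    obtain ⟨hmI, hdvd⟩ := Finset.mem_filter.mp hmf
    obtain ⟨s, hs⟩ := hdvd
    rw [Finset.mem_Icc] at hmI
    have hs0 : s ≠ 0 := by
      intro h
      subst h
      simp at hs
      omega
    have hsle : s ≤ S := by
      rw [hSdef]
      rw [Int.le_ediv_iff_mul_le hNZ]
      have hcomm : s * (N:ℤ) = m - j := by rw [mul_comm]; omega
      omega
    have hsge : -(S+1) ≤ s := by
      have hMS : (M:ℤ) < (S+1)*(N:ℤ) := by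
        rw [hSdef]
        exact Int.lt_ediv_add_one_mul_self _ hNZ
      by_contra hcon
      push_neg at hcon
      have h1 : s + 1 ≤ -(S+1) := by omega
      have h2 : (s+1)*(N:ℤ) ≤ (-(S+1))*(N:ℤ) := by
        exact mul_le_mul_of_nonneg_right h1 (by omega)
      have h3 : s*(N:ℤ) = m - j := by rw [mul_comm]; omega
      nlinarith
    refine Finset.mem_image.mpr ⟨s, Finset.mem_erase.mpr ⟨hs0, Finset.mem_Icc.mpr ⟨hsge, hsle⟩⟩, ?_⟩
    rw [mul_comm]
    omega
  have h0mem : (0:ℤ) ∈ Finset.Icc (-(S+1)) S := Finset.mem_Icc.mpr ⟨by omega, hS0⟩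
  have h1 : E.card ≤ (((Finset.Icc (-(S+1)) S).erase 0).image (fun s => j + s*(N:ℤ))).card :=
    Finset.card_le_card hsub
  have h2 := Finset.card_image_le (s := (Finset.Icc (-(S+1)) S).erase 0) (f := fun s => j + s*(N:ℤ))
  have h3 : ((Finset.Icc (-(S+1)) S).erase 0).card = (Finset.Icc (-(S+1)) S).card - 1 :=
    Finset.card_erase_of_mem h0mem
  have h4 : ((Finset.Icc (-(S+1)) S).card : ℤ) = 2*S + 2 := by
    rw [Int.card_Icc]
    omega
  have hcardZ : (E.card : ℤ) ≤ 2*S + 1 := by omega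
  have hcard : (E.card : ℝ) ≤ 2*(S:ℝ) + 1 := by exact_mod_cast hcardZ
  have hSreal : (S:ℝ) ≤ (M:ℝ)/(N:ℝ) := by
    rw [le_div_iff₀ (by positivity : (0:ℝ) < (N:ℝ))]
    have := Int.ediv_mul_le (M:ℤ) (b := (N:ℤ)) (by omega)
    rw [← hSdef] at this
    exact_mod_cast this
  calc ‖∑ m ∈ E, a m‖ ≤ ∑ m ∈ E, ‖a m‖ := norm_sum_le _ _
    _ ≤ E.card • C := Finset.sum_le_card_nsmul _ _ _ (fun m _ => haC m)
    _ = (E.card : ℝ) * C := by rw [nsmul_eq_mul]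
    _ ≤ (2*(S:ℝ) + 1) * C := mul_le_mul_of_nonneg_right hcard hC0
    _ ≤ (2*((M:ℝ)/(N:ℝ)) + 1) * C := by
        apply mul_le_mul_of_nonneg_right _ hC0
        linarith

private noncomputable def st6SK (c : ℤ → ℂ) (d K : ℕ) (z : ℂ) : ℂ :=
  ∑ k ∈ Finset.Icc 1 K, (-(1:ℂ)/(2*(k:ℂ))) * (st6g c d z) ^ k

private lemma st6_gval (c : ℤ → ℂ) (d : ℕ) (z : ℂ) :
    st6g c d z = (((‖laurentEval c d z‖)^2 : ℝ) : ℂ) := by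
  unfold st6g
  rw [Complex.mul_conj, Complex.normSq_eq_norm_sq]

private lemma st6_SKval (c : ℤ → ℂ) (d K : ℕ) (z : ℂ) :
    st6SK c d K z
      = ((- ∑ k ∈ Finset.Icc 1 K, ((‖laurentEval c d z‖)^2)^k/(2*(k:ℝ)) : ℝ) : ℂ) := by
  unfold st6SK
  set x : ℝ := (‖laurentEval c d z‖)^2 with hx
  have hterm : ∀ k ∈ Finset.Icc 1 K, (-(1:ℂ)/(2*(k:ℂ))) * (st6g c d z) ^ k
      = ((-(x^k/(2*(k:ℝ))) : ℝ) : ℂ) := by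
    intro k hk
    have hk1 : 1 ≤ k := (Finset.mem_Icc.mp hk).1
    have hkR : ((k:ℂ)) ≠ 0 := Nat.cast_ne_zero.mpr (by omega)
    rw [st6_gval, ← hx]
    push_cast
    field_simp
  rw [Finset.sum_congr rfl hterm]
  push_cast
  rw [← Finset.sum_neg_distrib]

private lemma st6_dist (c : ℤ → ℂ) (d : ℕ) (η : ℝ) (hη : 0 < η) (hη' : η < 1)
    (hb : ∀ z : ℂ, ‖z‖ = 1 → ‖laurentEval c d z‖ ≤ 1 - η)
    (K : ℕ) (z : ℂ) (hz : ‖z‖ = 1) :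
    ‖logAbsB c d z - st6SK c d K z‖ ≤ ((1-η)^2)^(K+1)/(1-(1-η)^2)/2 := by
  set x : ℝ := (‖laurentEval c d z‖)^2 with hx
  have hx0 : 0 ≤ x := sq_nonneg _
  have hxx : x ≤ (1-η)^2 := by
    rw [hx]
    apply pow_le_pow_left₀ (norm_nonneg _) (hb z hz)
  have hx₀1 : (1-η)^2 < 1 := by nlinarith
  have h1 : logAbsB c d z - st6SK c d K z
      = ((Real.log (Real.sqrt (1 - x)) + ∑ k ∈ Finset.Icc 1 K, x^k/(2*(k:ℝ)) : ℝ) : ℂ) := by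
    rw [st6_SKval]
    unfold logAbsB
    rw [← hx]
    push_cast
    ring
  rw [h1, Complex.norm_real, Real.norm_eq_abs]
  exact st6_log_tail hx0 hxx hx₀1 K


/-- With `r_j` the Fourier coefficients of `log√(1−|b|²)` and `r̂_j` their
DFT approximations on `N` points (`N` even, `N > 2d/η`):
(i) `|r_j| ≤ (1/2) r^{−|j|} |log η|` for all `j ∈ ℤ`;
(ii) `|r_j − r̂_j| ≤ 2 r^{j−N} |log η|` for `0 ≤ j ≤ N/2`. -/
theorem stmt6 (d : ℕ) (hd : 1 ≤ d) (η : ℝ) (hη : 0 < η) (hη' : η < 1/2)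
    (c : ℤ → ℂ)
    (hb : ∀ z : ℂ, ‖z‖ = 1 → ‖laurentEval c d z‖ ≤ 1 - η)
    (r : ℝ) (hr : 1 < r) (hrd : r ^ (2 * d) = (1 - η)⁻¹)
    (N : ℕ) (hN : 0 < N) (hNeven : 2 ∣ N) (hNlarge : 2 * (d : ℝ) / η < N) :
    (∀ j : ℤ, ‖circleFourierCoeff (logAbsB c d) j‖
        ≤ (1/2) * r ^ (-(j.natAbs : ℤ)) * |Real.log η|) ∧
    (∀ j : ℕ, 2 * j ≤ N →
      ‖circleFourierCoeff (logAbsB c d) j - discreteFourier (logAbsB c d) N j‖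
        ≤ 2 * r ^ ((j : ℤ) - (N : ℤ)) * |Real.log η|) := by
  classical
  have hη1 : η < 1 := by linarith
  have h1η : (0:ℝ) < 1 - η := by linarith
  have hr0 : (0:ℝ) < r := lt_trans one_pos hr
  have hrne : r ≠ 0 := hr0.ne'
  have hr1 : (1:ℝ) ≤ r := hr.le
  have hy0 : (0:ℝ) ≤ 1 - η := h1η.le
  have hy1 : 1 - η < 1 := by linarith
  have hx₀0 : (0:ℝ) ≤ (1-η)^2 := sq_nonneg _
  have hx₀1 : (1-η)^2 < 1 := by nlinarith
  have hNR : (0:ℝ) < N := by exact_mod_cast hN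
  have hlogeq : |Real.log η| = -Real.log η := abs_of_neg (Real.log_neg hη hη1)
  have hlog1 : 1 - η ≤ |Real.log η| := by
    rw [hlogeq]
    linarith [Real.log_le_sub_one_of_pos hη]
  have hyk : ∀ k : ℕ, (1-η) ^ k = r ^ (-(2*(d:ℤ)*(k:ℤ))) := by
    intro k
    have h1 : r ^ (2*d*k) = ((1-η) ^ k)⁻¹ := by rw [pow_mul, hrd, inv_pow]
    have h2 : (-(2*(d:ℤ)*(k:ℤ))) = -((2*d*k : ℕ) : ℤ) := by push_cast; ring
    rw [h2, zpow_neg, zpow_natCast, h1, inv_inv]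
  have hzmono : ∀ {m n : ℤ}, m ≤ n → r ^ m ≤ r ^ n := fun h => zpow_le_zpow_right₀ hr1 h
  have hzpos : ∀ m : ℤ, (0:ℝ) < r ^ m := fun m => zpow_pos hr0 m
  -- continuity facts
  obtain ⟨ab, hab0, habe⟩ := st6_rep_laurent c d
  have hbcont : Continuous fun θ : ℝ => laurentEval c d (Complex.exp (Complex.I * θ)) :=
    st6_rep_continuous habe
  have hgcont : ∀ k : ℕ, Continuous fun θ : ℝ => (st6g c d (Complex.exp (Complex.I * θ)))^k := by
    intro k
    obtain ⟨a, ha0, ha⟩ := st6_rep_gpow c d k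
    exact st6_rep_continuous ha
  have hSKcont : ∀ K : ℕ, Continuous fun θ : ℝ => st6SK c d K (Complex.exp (Complex.I * θ)) := by
    intro K
    unfold st6SK
    exact continuous_finset_sum _ fun k _ => continuous_const.mul (hgcont k)
  have hfcont : Continuous fun θ : ℝ => logAbsB c d (Complex.exp (Complex.I * θ)) := by
    unfold logAbsB
    have hsq : Continuous fun θ : ℝ =>
        Real.sqrt (1 - (‖laurentEval c d (Complex.exp (Complex.I * θ))‖)^2) :=
      Real.continuous_sqrt.comp (continuous_const.sub ((continuous_norm.comp hbcont).pow 2))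
    have hpos : ∀ θ : ℝ,
        Real.sqrt (1 - (‖laurentEval c d (Complex.exp (Complex.I * θ))‖)^2) ≠ 0 := by
      intro θ
      rw [Real.sqrt_ne_zero']
      have hble := hb _ (st6_abs_eI θ)
      nlinarith [norm_nonneg (laurentEval c d (Complex.exp (Complex.I * θ)))]
    exact Complex.continuous_ofReal.comp (hsq.log hpos)
  -- bounds on circle
  have hgabs : ∀ (k : ℕ) (z : ℂ), ‖z‖ = 1 →
      ‖(st6g c d z)^k‖ ≤ ((1-η)^2)^k := by
    intro k z hz
    rw [norm_pow]
    apply pow_le_pow_left₀ (norm_nonneg _)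
    rw [st6_gval, Complex.norm_real, Real.norm_eq_abs, abs_of_nonneg (sq_nonneg _)]
    exact pow_le_pow_left₀ (norm_nonneg _) (hb z hz) 2
  have hcfc_bound : ∀ (k : ℕ) (i : ℤ),
      ‖circleFourierCoeff (fun z => (st6g c d z)^k) i‖ ≤ ((1-η)^2)^k := by
    intro k i
    obtain ⟨a, ha0, ha⟩ := st6_rep_gpow c d k
    exact st6_cfc_abs_le (st6_rep_continuous ha) (fun z hz => hgabs k z hz) i
  -- part (i) per-k bound
  have hk1 : ∀ (j : ℤ) (k : ℕ), ‖circleFourierCoeff (fun z => (st6g c d z)^k) j‖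
      ≤ r ^ (-(j.natAbs:ℤ)) * (1-η)^k := by
    intro j k
    by_cases hc : (j.natAbs:ℤ) ≤ 2*(d:ℤ)*(k:ℤ)
    · refine le_trans (hcfc_bound k j) ?_
      have e1 : ((1-η)^2)^k = r ^ (-(2*(d:ℤ)*(k:ℤ)) + -(2*(d:ℤ)*(k:ℤ))) := by
        rw [zpow_add₀ hrne, ← hyk k, ← pow_add, ← pow_mul]
        congr 1
        omega
      have e2 : r ^ (-(j.natAbs:ℤ)) * (1-η)^k = r ^ (-(j.natAbs:ℤ) + -(2*(d:ℤ)*(k:ℤ))) := by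
        rw [zpow_add₀ hrne, hyk k]
      rw [e1, e2]
      exact hzmono (by linarith)
    · obtain ⟨a, ha0, ha⟩ := st6_rep_gpow c d k
      rw [st6_cfc_rep ha j, if_neg, norm_zero]
      · exact mul_nonneg (hzpos _).le (pow_nonneg hy0 k)
      · intro hmem
        rw [Finset.mem_Icc] at hmem
        apply hc
        have habs : (j.natAbs:ℤ) = |j| := (Int.abs_eq_natAbs j).symm
        rw [habs]
        have h1 : ((2*d*k : ℕ):ℤ) = 2*(d:ℤ)*(k:ℤ) := by push_cast; ring
        rw [h1] at hmem
        exact abs_le.mpr ⟨by linarith [hmem.1], hmem.2⟩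
  -- part (ii) per-k bound
  have hk2 : ∀ (j : ℕ), 2*(j:ℤ) ≤ (N:ℤ) → ∀ (k : ℕ), 1 ≤ k →
      ‖discreteFourier (fun z => (st6g c d z)^k) N (j:ℤ)
        - circleFourierCoeff (fun z => (st6g c d z)^k) (j:ℤ)‖
      ≤ (if (N:ℤ) - (j:ℤ) ≤ 2*(d:ℤ)*(k:ℤ)
          then (2*((2*(d:ℝ)*(k:ℝ))/(N:ℝ)) + 1) * (r ^ ((j:ℤ)-(N:ℤ)) * (1-η)^k) else 0) := by
    intro j hj k hk1'
    obtain ⟨a, ha0, ha⟩ := st6_rep_gpow c d k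
    have haC : ∀ m : ℤ, ‖a m‖ ≤ ((1-η)^2)^k := by
      intro m
      by_cases hm : m ∈ Finset.Icc (-((2*d*k:ℕ):ℤ)) ((2*d*k:ℕ):ℤ)
      · have h' := st6_cfc_rep ha m
        rw [if_pos hm] at h'
        rw [← h']
        exact hcfc_bound k m
      · rw [ha0 m hm, norm_zero]
        positivity
    rw [st6_alias_sum hN ha (j:ℤ)]
    by_cases hc : (N:ℤ) - (j:ℤ) ≤ 2*(d:ℤ)*(k:ℤ)
    · rw [if_pos hc]
      refine le_trans (st6_alias_bound hN haC (j:ℤ) (by positivity) hj) ?_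
      have hM : ((2*d*k : ℕ):ℝ) = 2*(d:ℝ)*(k:ℝ) := by push_cast; ring
      rw [hM]
      refine mul_le_mul_of_nonneg_left ?_ (by positivity)
      have e1 : ((1-η)^2)^k = r ^ (-(2*(d:ℤ)*(k:ℤ))) * (1-η)^k := by
        rw [← hyk k, ← pow_add, ← pow_mul]
        congr 1
        omega
      rw [e1]
      exact mul_le_mul_of_nonneg_right (hzmono (by linarith)) (pow_nonneg hy0 k)
    · rw [if_neg hc]
      push_neg at hc
      rw [st6_alias_empty (j:ℤ) (by positivity) (by push_cast; linarith), Finset.sum_empty, norm_zero]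
  -- weight absolute values
  have hwabs : ∀ k : ℕ, ‖-(1:ℂ)/(2*(k:ℂ))‖ = 1/(2*(k:ℝ)) := by
    intro k
    rw [norm_div]
    simp [Complex.norm_natCast]
  -- sum bound for (i)
  have hsum1 : ∀ (j : ℤ) (K : ℕ),
      ‖circleFourierCoeff (st6SK c d K) j‖
        ≤ (1/2) * r ^ (-(j.natAbs:ℤ)) * |Real.log η| := by
    intro j K
    have hexp : circleFourierCoeff (st6SK c d K) j
        = ∑ k ∈ Finset.Icc 1 K, (-(1:ℂ)/(2*(k:ℂ)))
            * circleFourierCoeff (fun z => (st6g c d z)^k) j := by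
      have h' := st6_cfc_smul_sum (K := K) (w := fun k => (-(1:ℂ)/(2*(k:ℂ))))
        (u := fun k z => (st6g c d z)^k) hgcont j
      unfold st6SK
      exact h'
    rw [hexp]
    refine le_trans (norm_sum_le _ _) ?_
    have hterm : ∀ k ∈ Finset.Icc 1 K,
        ‖(-(1:ℂ)/(2*(k:ℂ))) * circleFourierCoeff (fun z => (st6g c d z)^k) j‖
        ≤ (1/2) * r ^ (-(j.natAbs:ℤ)) * ((1-η)^k/(k:ℝ)) := by
      intro k hk
      have hk1' : 1 ≤ k := (Finset.mem_Icc.mp hk).1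
      have hkR : (0:ℝ) < (k:ℝ) := by exact_mod_cast hk1'
      rw [norm_mul, hwabs k]
      calc 1/(2*(k:ℝ)) * ‖circleFourierCoeff (fun z => (st6g c d z)^k) j‖
          ≤ 1/(2*(k:ℝ)) * (r ^ (-(j.natAbs:ℤ)) * (1-η)^k) :=
            mul_le_mul_of_nonneg_left (hk1 j k) (by positivity)
        _ = (1/2) * r ^ (-(j.natAbs:ℤ)) * ((1-η)^k/(k:ℝ)) := by
            field_simp
    refine le_trans (Finset.sum_le_sum hterm) ?_
    rw [← Finset.mul_sum]
    refine mul_le_mul_of_nonneg_left ?_ (mul_nonneg (by norm_num) (hzpos _).le)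
    have h' := st6_log_partial hy0 hy1 K
    rw [show (1 : ℝ) - (1-η) = η by ring] at h'
    rw [hlogeq]
    exact h'
  -- sum bound for (ii)
  have hsum2 : ∀ (j : ℕ), 2*(j:ℤ) ≤ (N:ℤ) → ∀ K : ℕ,
      ‖circleFourierCoeff (st6SK c d K) (j:ℤ) - discreteFourier (st6SK c d K) N (j:ℤ)‖
        ≤ 2*(1-η) * r ^ ((j:ℤ)-(N:ℤ)) := by
    intro j hj K
    have hexp1 : circleFourierCoeff (st6SK c d K) (j:ℤ)
        = ∑ k ∈ Finset.Icc 1 K, (-(1:ℂ)/(2*(k:ℂ)))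
            * circleFourierCoeff (fun z => (st6g c d z)^k) (j:ℤ) := by
      have h' := st6_cfc_smul_sum (K := K) (w := fun k => (-(1:ℂ)/(2*(k:ℂ))))
        (u := fun k z => (st6g c d z)^k) hgcont (j:ℤ)
      unfold st6SK
      exact h'
    have hexp2 : discreteFourier (st6SK c d K) N (j:ℤ)
        = ∑ k ∈ Finset.Icc 1 K, (-(1:ℂ)/(2*(k:ℂ)))
            * discreteFourier (fun z => (st6g c d z)^k) N (j:ℤ) := by
      have h' := st6_dft_smul_sum (K := K) (N := N) (w := fun k => (-(1:ℂ)/(2*(k:ℂ))))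
        (u := fun k z => (st6g c d z)^k) (j:ℤ)
      unfold st6SK
      exact h'
    rw [hexp1, hexp2, ← Finset.sum_sub_distrib]
    refine le_trans (norm_sum_le _ _) ?_
    have hterm : ∀ k ∈ Finset.Icc 1 K,
        ‖(-(1:ℂ)/(2*(k:ℂ))) * circleFourierCoeff (fun z => (st6g c d z)^k) (j:ℤ)
          - (-(1:ℂ)/(2*(k:ℂ))) * discreteFourier (fun z => (st6g c d z)^k) N (j:ℤ)‖
        ≤ 2*η * (r ^ ((j:ℤ)-(N:ℤ)) * (1-η)^k) := by
      intro k hk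
      have hk1' : 1 ≤ k := (Finset.mem_Icc.mp hk).1
      have hkR : (1:ℝ) ≤ (k:ℝ) := by exact_mod_cast hk1'
      rw [← mul_sub, norm_mul, hwabs k,
        norm_sub_rev]
      have h2 := hk2 j hj k hk1'
      by_cases hc : (N:ℤ) - (j:ℤ) ≤ 2*(d:ℤ)*(k:ℤ)
      · rw [if_pos hc] at h2
        have h2dN : 2*(d:ℝ)/(N:ℝ) < η := by
          rw [div_lt_iff₀ hNR]
          rw [div_lt_iff₀ hη] at hNlarge
          linarith
        have hNk : (N:ℝ) ≤ 4*(d:ℝ)*(k:ℝ) := by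
          have hjR : 2*(j:ℝ) ≤ (N:ℝ) := by exact_mod_cast hj
          have hcR : (N:ℝ) - (j:ℝ) ≤ 2*(d:ℝ)*(k:ℝ) := by exact_mod_cast hc
          linarith
        calc 1/(2*(k:ℝ)) * ‖discreteFourier (fun z => (st6g c d z)^k) N (j:ℤ)
              - circleFourierCoeff (fun z => (st6g c d z)^k) (j:ℤ)‖
            ≤ 1/(2*(k:ℝ)) * ((2*((2*(d:ℝ)*(k:ℝ))/(N:ℝ)) + 1) * (r ^ ((j:ℤ)-(N:ℤ)) * (1-η)^k)) :=
              mul_le_mul_of_nonneg_left h2 (by positivity)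
          _ = (2*(d:ℝ)/(N:ℝ) + 1/(2*(k:ℝ))) * (r ^ ((j:ℤ)-(N:ℤ)) * (1-η)^k) := by
              have hk0 : (k:ℝ) ≠ 0 := by positivity
              field_simp
          _ ≤ 2*η * (r ^ ((j:ℤ)-(N:ℤ)) * (1-η)^k) := by
              refine mul_le_mul_of_nonneg_right ?_
                (mul_nonneg (hzpos _).le (pow_nonneg hy0 k))
              have hhalf : 1/(2*(k:ℝ)) ≤ 2*(d:ℝ)/(N:ℝ) := by
                rw [div_le_div_iff₀ (by positivity) hNR]
                nlinarith
              linarith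
      · rw [if_neg hc] at h2
        have h0 : ‖discreteFourier (fun z => (st6g c d z)^k) N (j:ℤ)
            - circleFourierCoeff (fun z => (st6g c d z)^k) (j:ℤ)‖ = 0 :=
          le_antisymm h2 (norm_nonneg _)
        rw [h0, mul_zero]
        positivity
    refine le_trans (Finset.sum_le_sum hterm) ?_
    rw [← Finset.mul_sum]
    have hgeo := st6_geom_partial hy0 hy1 K
    rw [show (1 : ℝ) - (1-η) = η by ring] at hgeo
    calc 2*η * ∑ k ∈ Finset.Icc 1 K, r ^ ((j:ℤ)-(N:ℤ)) * (1-η)^k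
        = 2*η * r ^ ((j:ℤ)-(N:ℤ)) * ∑ k ∈ Finset.Icc 1 K, (1-η)^k := by
          rw [← Finset.mul_sum]
          ring
      _ ≤ 2*η * r ^ ((j:ℤ)-(N:ℤ)) * ((1-η)/η) := by
          refine mul_le_mul_of_nonneg_left hgeo (by positivity)
      _ = 2*(1-η) * r ^ ((j:ℤ)-(N:ℤ)) := by
          field_simp
  -- tail tendsto
  have hεlim : Filter.Tendsto (fun K : ℕ => ((1-η)^2)^(K+1)/(1-(1-η)^2)/2)
      Filter.atTop (nhds 0) := by
    have h1 := (tendsto_pow_atTop_nhds_zero_of_lt_one hx₀0 hx₀1).comp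
      (Filter.tendsto_add_atTop_nat 1)
    have h2 := (h1.div_const (1-(1-η)^2)).div_const 2
    simpa using h2
  constructor
  · -- part (i)
    intro j
    have hbound : ∀ K : ℕ, ‖circleFourierCoeff (logAbsB c d) j‖
        ≤ (1/2) * r ^ (-(j.natAbs:ℤ)) * |Real.log η| + ((1-η)^2)^(K+1)/(1-(1-η)^2)/2 := by
      intro K
      have hd1 : ‖circleFourierCoeff (logAbsB c d) j
          - circleFourierCoeff (st6SK c d K) j‖ ≤ ((1-η)^2)^(K+1)/(1-(1-η)^2)/2 := by
        rw [← st6_cfc_sub hfcont (hSKcont K) j]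
        exact st6_cfc_abs_le (hfcont.sub (hSKcont K))
          (fun z hz => st6_dist c d η hη hη1 hb K z hz) j
      calc ‖circleFourierCoeff (logAbsB c d) j‖
          = ‖(circleFourierCoeff (logAbsB c d) j
              - circleFourierCoeff (st6SK c d K) j) + circleFourierCoeff (st6SK c d K) j‖ := by
            rw [sub_add_cancel]
        _ ≤ ‖circleFourierCoeff (logAbsB c d) j
              - circleFourierCoeff (st6SK c d K) j‖ + ‖circleFourierCoeff (st6SK c d K) j‖ :=
            norm_add_le _ _
        _ ≤ ((1-η)^2)^(K+1)/(1-(1-η)^2)/2 + (1/2) * r ^ (-(j.natAbs:ℤ)) * |Real.log η| :=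
            add_le_add hd1 (hsum1 j K)
        _ = (1/2) * r ^ (-(j.natAbs:ℤ)) * |Real.log η| + ((1-η)^2)^(K+1)/(1-(1-η)^2)/2 := by
            ring
    have hlim : Filter.Tendsto (fun K : ℕ => (1/2) * r ^ (-(j.natAbs:ℤ)) * |Real.log η|
        + ((1-η)^2)^(K+1)/(1-(1-η)^2)/2) Filter.atTop
        (nhds ((1/2) * r ^ (-(j.natAbs:ℤ)) * |Real.log η|)) := by
      have h0 : Filter.Tendsto (fun _ : ℕ => (1/2) * r ^ (-(j.natAbs:ℤ)) * |Real.log η|)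
          Filter.atTop (nhds ((1/2) * r ^ (-(j.natAbs:ℤ)) * |Real.log η|)) := tendsto_const_nhds
      have := h0.add hεlim
      simpa using this
    exact ge_of_tendsto hlim (Filter.Eventually.of_forall hbound)
  · -- part (ii)
    intro j hj
    have hjZ : 2*(j:ℤ) ≤ (N:ℤ) := by exact_mod_cast hj
    have hbound : ∀ K : ℕ, ‖circleFourierCoeff (logAbsB c d) (j:ℤ)
        - discreteFourier (logAbsB c d) N (j:ℤ)‖
        ≤ 2*(1-η) * r ^ ((j:ℤ)-(N:ℤ))
          + (((1-η)^2)^(K+1)/(1-(1-η)^2)/2 + ((1-η)^2)^(K+1)/(1-(1-η)^2)/2) := by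
      intro K
      have hd1 : ‖circleFourierCoeff (logAbsB c d) (j:ℤ)
          - circleFourierCoeff (st6SK c d K) (j:ℤ)‖ ≤ ((1-η)^2)^(K+1)/(1-(1-η)^2)/2 := by
        rw [← st6_cfc_sub hfcont (hSKcont K) (j:ℤ)]
        exact st6_cfc_abs_le (hfcont.sub (hSKcont K))
          (fun z hz => st6_dist c d η hη hη1 hb K z hz) (j:ℤ)
      have hd3 : ‖discreteFourier (st6SK c d K) N (j:ℤ)
          - discreteFourier (logAbsB c d) N (j:ℤ)‖ ≤ ((1-η)^2)^(K+1)/(1-(1-η)^2)/2 := by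
        rw [norm_sub_rev]
        exact st6_dft_sub_abs_le hN (fun z hz => st6_dist c d η hη hη1 hb K z hz) (j:ℤ)
      have htri := dist_triangle4 (circleFourierCoeff (logAbsB c d) (j:ℤ))
        (circleFourierCoeff (st6SK c d K) (j:ℤ))
        (discreteFourier (st6SK c d K) N (j:ℤ))
        (discreteFourier (logAbsB c d) N (j:ℤ))
      rw [Complex.dist_eq, Complex.dist_eq, Complex.dist_eq, Complex.dist_eq] at htri
      refine le_trans htri ?_
      have := hsum2 j hjZ K
      linarith [hd1, hd3, this]
    have hlim : Filter.Tendsto (fun K : ℕ => 2*(1-η) * r ^ ((j:ℤ)-(N:ℤ))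
        + (((1-η)^2)^(K+1)/(1-(1-η)^2)/2 + ((1-η)^2)^(K+1)/(1-(1-η)^2)/2))
        Filter.atTop (nhds (2*(1-η) * r ^ ((j:ℤ)-(N:ℤ)))) := by
      have h0 : Filter.Tendsto (fun _ : ℕ => 2*(1-η) * r ^ ((j:ℤ)-(N:ℤ)))
          Filter.atTop (nhds (2*(1-η) * r ^ ((j:ℤ)-(N:ℤ)))) := tendsto_const_nhds
      have := h0.add (hεlim.add hεlim)
      simpa using this
    have hfinal := ge_of_tendsto hlim (Filter.Eventually.of_forall hbound)
    refine le_trans hfinal ?_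
    have h1 : 2*(1-η) * r ^ ((j:ℤ)-(N:ℤ)) ≤ 2*|Real.log η| * r ^ ((j:ℤ)-(N:ℤ)) := by
      refine mul_le_mul_of_nonneg_right ?_ (hzpos _).le
      linarith
    calc 2*(1-η) * r ^ ((j:ℤ)-(N:ℤ)) ≤ 2*|Real.log η| * r ^ ((j:ℤ)-(N:ℤ)) := h1
      _ = 2 * r ^ ((j:ℤ)-(N:ℤ)) * |Real.log η| := by ring
end

section
/- For every z ∈ A_r one has |b(z)/a(z)| ≤ r^d·η^{−1}. -/
open scoped BigOperators

/-- For a polynomial `p`, the function `p*(z) = conj(p(conj(z)⁻¹))`, so that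
`p*(z) = conj(p(z))` on the unit circle. -/
noncomputable def polyStar (p : Polynomial ℂ) (z : ℂ) : ℂ :=
  (starRingEnd ℂ) (Polynomial.eval ((starRingEnd ℂ) z)⁻¹ p)

/-- The entire function `z ↦ z^d b(z)`. -/
noncomputable def entLaurent (c : ℤ → ℂ) (d : ℕ) (z : ℂ) : ℂ :=
  ∑ j ∈ Finset.Icc (-(d : ℤ)) (d : ℤ), c j * z ^ (j + (d : ℤ)).toNat

/-- Conjugate-reflected coefficients. -/
noncomputable def cstar (c : ℤ → ℂ) (j : ℤ) : ℂ := (starRingEnd ℂ) (c (-j))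

lemma cstar_cstar (c : ℤ → ℂ) : cstar (cstar c) = c := by
  funext j; simp [cstar]

lemma entLaurent_diff (c : ℤ → ℂ) (d : ℕ) : Differentiable ℂ (entLaurent c d) := by
  apply Differentiable.fun_sum
  intro j _
  exact (differentiable_pow _).const_mul _

lemma entLaurent_zpow (c : ℤ → ℂ) (d : ℕ) {z : ℂ} (hz : z ≠ 0) :
    entLaurent c d z = ∑ j ∈ Finset.Icc (-(d : ℤ)) (d : ℤ), c j * z ^ (j + (d : ℤ)) := by
  unfold entLaurent
  refine Finset.sum_congr rfl fun j hj => ?_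
  rw [Finset.mem_Icc] at hj
  have h1 : ((j + (d : ℤ)).toNat : ℤ) = j + d := Int.toNat_of_nonneg (by omega)
  rw [← zpow_natCast z, h1]

lemma entLaurent_eq (c : ℤ → ℂ) (d : ℕ) {z : ℂ} (hz : z ≠ 0) :
    entLaurent c d z = z ^ d * laurentEval c d z := by
  rw [entLaurent_zpow c d hz]
  unfold laurentEval
  rw [Finset.mul_sum]
  refine Finset.sum_congr rfl fun j hj => ?_
  rw [zpow_add₀ hz, ← zpow_natCast z d]
  ring

lemma entLaurent_key (c : ℤ → ℂ) (d : ℕ) {z : ℂ} (hz : z ≠ 0) :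
    entLaurent c d z
      = z ^ (2 * d) * (starRingEnd ℂ) (entLaurent (cstar c) d ((starRingEnd ℂ) z)⁻¹) := by
  have hzc : ((starRingEnd ℂ) z)⁻¹ ≠ 0 := by simpa using hz
  rw [entLaurent_zpow c d hz, entLaurent_zpow (cstar c) d hzc, map_sum, Finset.mul_sum]
  refine Finset.sum_nbij' (fun j => -j) (fun j => -j) ?_ ?_ ?_ ?_ ?_
  · intro a ha; simp only [Finset.mem_Icc] at ha ⊢; omega
  · intro a ha; simp only [Finset.mem_Icc] at ha ⊢; omega
  · intro a _; simp
  · intro a _; simp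
  · intro a ha
    rw [Finset.mem_Icc] at ha
    have hconj : (starRingEnd ℂ) (((starRingEnd ℂ) z)⁻¹) = z⁻¹ := by
      rw [map_inv₀, Complex.conj_conj]
    rw [map_mul, map_zpow₀, hconj]
    simp only [cstar, neg_neg, Complex.conj_conj, inv_zpow, ← zpow_neg]
    rw [← zpow_natCast z (2*d), mul_comm (c a) (z ^ (-(-a + (d:ℤ)))), ← mul_assoc,
      ← zpow_add₀ hz]
    rw [show ((2*d:ℕ):ℤ) + -(-a + (d:ℤ)) = a + (d:ℤ) by push_cast; ring]
    ring

/-- Reversed conjugate polynomial: `w ↦ w^{2d} p*(w)` as an entire function. -/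
noncomputable def pRev (p : Polynomial ℂ) (d : ℕ) (w : ℂ) : ℂ :=
  ∑ k ∈ Finset.range (2 * d + 1), (starRingEnd ℂ) (p.coeff k) * w ^ (2 * d - k)

lemma pRev_diff (p : Polynomial ℂ) (d : ℕ) : Differentiable ℂ (pRev p d) := by
  apply Differentiable.fun_sum
  intro k _
  exact (differentiable_pow _).const_mul _

lemma pow_inv_helper {z : ℂ} (hz : z ≠ 0) {k n : ℕ} (hk : k ≤ n) :
    z ^ n * (z⁻¹) ^ k = z ^ (n - k) := by
  rw [inv_pow, show z ^ n = z ^ (n - k) * z ^ k by rw [← pow_add, Nat.sub_add_cancel hk],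
    mul_assoc, mul_inv_cancel₀ (pow_ne_zero _ hz), mul_one]

lemma pRev_eq (p : Polynomial ℂ) (d : ℕ) (hpdeg : p.natDegree ≤ 2 * d) {z : ℂ} (hz : z ≠ 0) :
    pRev p d z = z ^ (2 * d) * polyStar p z := by
  have hzc : ((starRingEnd ℂ) z)⁻¹ ≠ 0 := by simpa using hz
  unfold pRev polyStar
  rw [Polynomial.eval_eq_sum_range' (lt_of_le_of_lt hpdeg (Nat.lt_succ_self _)), map_sum,
    Finset.mul_sum]
  refine Finset.sum_congr rfl fun k hk => ?_
  rw [Finset.mem_range] at hk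
  rw [map_mul, map_pow, map_inv₀, Complex.conj_conj]
  have h := pow_inv_helper hz (show k ≤ 2*d by omega) (z := z)
  linear_combination (-(starRingEnd ℂ) (p.coeff k)) * h

lemma pEval_key (p : Polynomial ℂ) (d : ℕ) (hpdeg : p.natDegree ≤ 2 * d) {z : ℂ} (hz : z ≠ 0) :
    Polynomial.eval z p
      = z ^ (2 * d) * (starRingEnd ℂ) (pRev p d ((starRingEnd ℂ) z)⁻¹) := by
  unfold pRev
  rw [Polynomial.eval_eq_sum_range' (lt_of_le_of_lt hpdeg (Nat.lt_succ_self _)), map_sum,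
    Finset.mul_sum]
  refine Finset.sum_congr rfl fun k hk => ?_
  rw [Finset.mem_range] at hk
  rw [map_mul, map_pow, map_inv₀, Complex.conj_conj, Complex.conj_conj]
  have h := pow_inv_helper hz (show 2*d - k ≤ 2*d by omega) (z := z)
  rw [Nat.sub_sub_self (by omega : k ≤ 2*d)] at h
  linear_combination (-(p.coeff k)) * h

/-- Maximum modulus principle on the closed unit disc. -/
lemma maxmod {f : ℂ → ℂ} (hf : Differentiable ℂ f) {M : ℝ}
    (h : ∀ w : ℂ, ‖w‖ = 1 → ‖f w‖ ≤ M) :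
    ∀ w : ℂ, ‖w‖ ≤ 1 → ‖f w‖ ≤ M := by
  intro w hw
  have h1 : ∀ u ∈ frontier (Metric.ball (0 : ℂ) 1), ‖f u‖ ≤ M := by
    intro u hu
    rw [frontier_ball (0 : ℂ) one_ne_zero] at hu
    exact h u (by simpa [Complex.norm_def] using hu)
  have h2 : w ∈ closure (Metric.ball (0 : ℂ) 1) := by
    rw [closure_ball (0 : ℂ) one_ne_zero]
    simpa [Complex.norm_def] using hw
  exact Complex.norm_le_of_forall_mem_frontier_norm_le Metric.isBounded_ball
    hf.diffContOnCl h1 h2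

lemma conj_inv_circle {w : ℂ} (hw : ‖w‖ = 1) : ((starRingEnd ℂ) w)⁻¹ = w := by
  rw [← Complex.inv_eq_conj hw, inv_inv]

lemma abs_conj_inv {w : ℂ} : ‖((starRingEnd ℂ) w)⁻¹‖ = (‖w‖)⁻¹ := by
  rw [norm_inv, Complex.norm_conj]

set_option maxHeartbeats 1000000 in
/-- With `a = p*`, for every `z` in the annulus `A_r` one has
`|b(z)/a(z)| ≤ r^d η⁻¹`. -/
theorem stmt8 (d : ℕ) (hd : 1 ≤ d) (η : ℝ) (hη : 0 < η) (hη' : η < 1/2)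
    (c : ℤ → ℂ)
    (hb : ∀ z : ℂ, ‖z‖ = 1 → ‖laurentEval c d z‖ ≤ 1 - η)
    (r : ℝ) (hr : 1 < r) (hrd : r ^ (2 * d) = (1 - η)⁻¹)
    (p : Polynomial ℂ) (hpdeg : p.natDegree ≤ 2 * d)
    (hpz : ∀ z : ℂ, ‖z‖ ≤ 1 → Polynomial.eval z p ≠ 0)
    (hpm : ∀ z : ℂ, ‖z‖ = 1 →
      (‖Polynomial.eval z p‖)^2 = 1 - (‖laurentEval c d z‖)^2) :
    ∀ z : ℂ, r⁻¹ < ‖z‖ → ‖z‖ < r →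
      ‖laurentEval c d z / polyStar p z‖ ≤ r ^ d * η⁻¹ := by
  have hη1 : (0:ℝ) < 1 - η := by linarith
  have hr0 : (0:ℝ) < r := lt_trans one_pos hr
  -- boundary bounds for the entire Laurent functions
  have hFcirc : ∀ w : ℂ, ‖w‖ = 1 → ‖entLaurent c d w‖ ≤ 1 - η := by
    intro w hw
    have hw0 : w ≠ 0 := by
      intro h; rw [h] at hw; simp at hw
    rw [entLaurent_eq c d hw0, norm_mul, norm_pow, hw, one_pow, one_mul]
    exact hb w hw
  have hGcirc : ∀ w : ℂ, ‖w‖ = 1 →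
      ‖entLaurent (cstar c) d w‖ ≤ 1 - η := by
    intro w hw
    have hw0 : w ≠ 0 := by
      intro h; rw [h] at hw; simp at hw
    rw [entLaurent_key (cstar c) d hw0, cstar_cstar, norm_mul, norm_pow, hw, one_pow,
      one_mul, Complex.norm_conj]
    exact hFcirc _ (by rw [abs_conj_inv, hw, inv_one])
  have hFdisc := maxmod (entLaurent_diff c d) hFcirc
  have hGdisc := maxmod (entLaurent_diff (cstar c) d) hGcirc
  have hFout : ∀ w : ℂ, 1 ≤ ‖w‖ →
      ‖entLaurent c d w‖ ≤ (1 - η) * (‖w‖) ^ (2 * d) := by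
    intro w hw
    have hw0 : w ≠ 0 := by
      intro h; rw [h] at hw; simp at hw; linarith
    rw [entLaurent_key c d hw0, norm_mul, norm_pow, Complex.norm_conj]
    have h1 : ‖((starRingEnd ℂ) w)⁻¹‖ ≤ 1 := by
      rw [abs_conj_inv]; exact inv_le_one_of_one_le₀ hw
    calc ‖w‖ ^ (2*d) * ‖entLaurent (cstar c) d (((starRingEnd ℂ) w)⁻¹)‖
        ≤ ‖w‖ ^ (2*d) * (1 - η) := by
          exact mul_le_mul_of_nonneg_left (hGdisc _ h1) (by positivity)
      _ = (1 - η) * (‖w‖) ^ (2*d) := by ring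
  have hGout : ∀ w : ℂ, 1 ≤ ‖w‖ →
      ‖entLaurent (cstar c) d w‖ ≤ (1 - η) * (‖w‖) ^ (2 * d) := by
    intro w hw
    have hw0 : w ≠ 0 := by
      intro h; rw [h] at hw; simp at hw; linarith
    rw [entLaurent_key (cstar c) d hw0, cstar_cstar, norm_mul, norm_pow, Complex.norm_conj]
    have h1 : ‖((starRingEnd ℂ) w)⁻¹‖ ≤ 1 := by
      rw [abs_conj_inv]; exact inv_le_one_of_one_le₀ hw
    calc ‖w‖ ^ (2*d) * ‖entLaurent c d (((starRingEnd ℂ) w)⁻¹)‖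
        ≤ ‖w‖ ^ (2*d) * (1 - η) := by
          exact mul_le_mul_of_nonneg_left (hFdisc _ h1) (by positivity)
      _ = (1 - η) * (‖w‖) ^ (2*d) := by ring
  -- bounds for p
  have hpcirc : ∀ w : ℂ, ‖w‖ = 1 → ‖Polynomial.eval w p‖ ≤ 1 := by
    intro w hw
    have h := hpm w hw
    nlinarith [norm_nonneg (Polynomial.eval w p),
      norm_nonneg (laurentEval c d w), sq_nonneg (‖laurentEval c d w‖)]
  have hpdisc := maxmod (p.differentiable) hpcirc
  have hPcirc : ∀ w : ℂ, ‖w‖ = 1 → ‖pRev p d w‖ ≤ 1 := by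
    intro w hw
    have hw0 : w ≠ 0 := by
      intro h; rw [h] at hw; simp at hw
    rw [pRev_eq p d hpdeg hw0, norm_mul, norm_pow, hw, one_pow, one_mul]
    unfold polyStar
    rw [Complex.norm_conj]
    exact hpcirc _ (by rw [abs_conj_inv, hw, inv_one])
  have hPdisc := maxmod (pRev_diff p d) hPcirc
  have hpout : ∀ w : ℂ, 1 ≤ ‖w‖ →
      ‖Polynomial.eval w p‖ ≤ (‖w‖) ^ (2 * d) := by
    intro w hw
    have hw0 : w ≠ 0 := by
      intro h; rw [h] at hw; simp at hw; linarith
    rw [pEval_key p d hpdeg hw0, norm_mul, norm_pow, Complex.norm_conj]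
    have h1 : ‖((starRingEnd ℂ) w)⁻¹‖ ≤ 1 := by
      rw [abs_conj_inv]; exact inv_le_one_of_one_le₀ hw
    calc ‖w‖ ^ (2*d) * ‖pRev p d (((starRingEnd ℂ) w)⁻¹)‖
        ≤ ‖w‖ ^ (2*d) * 1 := mul_le_mul_of_nonneg_left (hPdisc _ h1) (by positivity)
      _ = (‖w‖) ^ (2*d) := by ring
  -- the fundamental identity
  set H : ℂ → ℂ := fun w =>
    Polynomial.eval w p * pRev p d w + entLaurent c d w * entLaurent (cstar c) d w
      - w ^ (2 * d) with hH
  have hHdiff : Differentiable ℂ H :=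
    ((p.differentiable.mul (pRev_diff p d)).add
      ((entLaurent_diff c d).mul (entLaurent_diff (cstar c) d))).sub (differentiable_pow _)
  have hHcirc : ∀ w : ℂ, ‖w‖ = 1 → H w = 0 := by
    intro w hw
    have hw0 : w ≠ 0 := by
      intro h; rw [h] at hw; simp at hw
    have hcw : ((starRingEnd ℂ) w)⁻¹ = w := conj_inv_circle hw
    have h1 : pRev p d w = w ^ (2*d) * (starRingEnd ℂ) (Polynomial.eval w p) := by
      rw [pRev_eq p d hpdeg hw0]; unfold polyStar; rw [hcw]
    have h2 : entLaurent (cstar c) d w = w ^ (2*d) * (starRingEnd ℂ) (entLaurent c d w) := by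
      rw [entLaurent_key (cstar c) d hw0, cstar_cstar, hcw]
    have e1 : Polynomial.eval w p * (starRingEnd ℂ) (Polynomial.eval w p)
        = ((‖Polynomial.eval w p‖ ^ 2 : ℝ) : ℂ) := by
      rw [Complex.mul_conj]; norm_cast; exact (Complex.sq_norm _).symm
    have e2 : entLaurent c d w * (starRingEnd ℂ) (entLaurent c d w)
        = ((‖entLaurent c d w‖ ^ 2 : ℝ) : ℂ) := by
      rw [Complex.mul_conj]; norm_cast; exact (Complex.sq_norm _).symm
    have e3 : ‖entLaurent c d w‖ = ‖laurentEval c d w‖ := by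
      rw [entLaurent_eq c d hw0, norm_mul, norm_pow, hw, one_pow, one_mul]
    have hsum : ((‖Polynomial.eval w p‖ ^ 2 : ℝ))
        + (‖entLaurent c d w‖ ^ 2 : ℝ) = 1 := by
      rw [e3, hpm w hw]; ring
    have : H w = w ^ (2*d) *
        ((Polynomial.eval w p * (starRingEnd ℂ) (Polynomial.eval w p)
          + entLaurent c d w * (starRingEnd ℂ) (entLaurent c d w)) - 1) := by
      rw [hH]; simp only []; rw [h1, h2]; ring
    rw [this, e1, e2]
    have : ((‖Polynomial.eval w p‖ ^ 2 : ℝ) : ℂ)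
        + ((‖entLaurent c d w‖ ^ 2 : ℝ) : ℂ) - 1
        = (((‖Polynomial.eval w p‖ ^ 2
            + ‖entLaurent c d w‖ ^ 2 - 1 : ℝ)) : ℂ) := by push_cast; ring
    rw [this, hsum]
    simp
  have hHdisc : ∀ w : ℂ, ‖w‖ ≤ 1 → H w = 0 := by
    intro w hw
    have := maxmod hHdiff (M := 0) (fun u hu => by rw [hHcirc u hu]; simp) w hw
    exact norm_eq_zero.mp (le_antisymm this (norm_nonneg _))
  have hHall : ∀ w : ℂ, H w = 0 := by
    have hana : AnalyticOnNhd ℂ H Set.univ :=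
      hHdiff.differentiableOn.analyticOnNhd isOpen_univ
    have hev : H =ᶠ[nhds (0:ℂ)] 0 := by
      filter_upwards [Metric.ball_mem_nhds (0:ℂ) one_pos] with w hw
      exact hHdisc w (le_of_lt (by simpa [Complex.norm_def] using hw))
    intro w
    exact hana.eqOn_zero_of_preconnected_of_eventuallyEq_zero isPreconnected_univ
      (Set.mem_univ 0) hev (Set.mem_univ w)
  -- now the main estimate
  intro z hz1 hz2
  set A := ‖z‖ with hA
  have hrinv : (0:ℝ) < r⁻¹ := by positivity
  have hA0 : 0 < A := lt_trans hrinv hz1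
  have hz0 : z ≠ 0 := norm_ne_zero_iff.mp hA0.ne'
  have hrd' : r ^ (2*d) * (1 - η) = 1 := by rw [hrd]; field_simp
  -- |F z| * |G z| ≤ (1-η) * A^(2d)
  have hApow_lb : (1 - η) ≤ A ^ (2*d) := by
    have h1 : r⁻¹ ≤ A := le_of_lt hz1
    have h2 : (r⁻¹) ^ (2*d) ≤ A ^ (2*d) := pow_le_pow_left₀ (le_of_lt hrinv) h1 _
    rw [inv_pow, hrd, inv_inv] at h2
    exact h2
  have hApow_ub : A ^ (2*d) ≤ (1 - η)⁻¹ := by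
    have h2 : A ^ (2*d) ≤ r ^ (2*d) := pow_le_pow_left₀ (le_of_lt hA0) (le_of_lt hz2) _
    rw [hrd] at h2
    exact h2
  have hFG : ‖entLaurent c d z‖ * ‖entLaurent (cstar c) d z‖
      ≤ (1 - η) * A ^ (2*d) := by
    rcases le_or_gt A 1 with hA1 | hA1
    · have h1 := hFdisc z hA1
      have h2 := hGdisc z hA1
      nlinarith [norm_nonneg (entLaurent c d z),
        norm_nonneg (entLaurent (cstar c) d z)]
    · have h1 := hFout z (le_of_lt hA1)
      have h2 := hGout z (le_of_lt hA1)
      have h3 : (1 - η) * A ^ (2*d) ≤ 1 := by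
        calc (1 - η) * A ^ (2*d) ≤ (1 - η) * (1 - η)⁻¹ :=
              mul_le_mul_of_nonneg_left hApow_ub (le_of_lt hη1)
          _ = 1 := by field_simp
      have h4 : (0:ℝ) ≤ A ^ (2*d) := by positivity
      nlinarith [norm_nonneg (entLaurent c d z),
        norm_nonneg (entLaurent (cstar c) d z),
        mul_le_mul h1 h2 (norm_nonneg _) (by positivity : (0:ℝ) ≤ (1-η) * A ^ (2*d))]
  -- |p z| * |pRev z| ≥ η * A^(2d)
  have hident : Polynomial.eval z p * pRev p d z
      = z ^ (2*d) - entLaurent c d z * entLaurent (cstar c) d z := by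
    have := hHall z
    rw [hH] at this
    simp only [] at this
    linear_combination this
  have habs1 : η * A ^ (2*d)
      ≤ ‖Polynomial.eval z p‖ * ‖pRev p d z‖ := by
    rw [← norm_mul, hident]
    have h1 : A ^ (2*d) - (1 - η) * A ^ (2*d)
        ≤ ‖z ^ (2*d)‖
          - ‖entLaurent c d z * entLaurent (cstar c) d z‖ := by
      rw [norm_pow, norm_mul]
      exact sub_le_sub (le_refl _) hFG
    calc η * A ^ (2*d) = A ^ (2*d) - (1 - η) * A ^ (2*d) := by ring
      _ ≤ ‖z ^ (2*d)‖
          - ‖entLaurent c d z * entLaurent (cstar c) d z‖ := h1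
      _ ≤ ‖z ^ (2*d) - entLaurent c d z * entLaurent (cstar c) d z‖ := by
          simpa using
            norm_sub_norm_le (z ^ (2*d)) (entLaurent c d z * entLaurent (cstar c) d z)
  have hPrev : ‖pRev p d z‖ = A ^ (2*d) * ‖polyStar p z‖ := by
    rw [pRev_eq p d hpdeg hz0, norm_mul, norm_pow]
  have hpz_ub : ‖Polynomial.eval z p‖ ≤ (1 - η)⁻¹ := by
    rcases le_or_gt A 1 with hA1 | hA1
    · refine le_trans (hpdisc z hA1) ?_
      rw [← hrd]
      exact one_le_pow₀ hr.le
    · exact le_trans (hpout z hA1.le) hApow_ub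
  have hS : η * (1 - η) ≤ ‖polyStar p z‖ := by
    have hpos : (0:ℝ) < A ^ (2*d) := by positivity
    have h1 : η ≤ ‖Polynomial.eval z p‖ * ‖polyStar p z‖ := by
      have h2 : η * A ^ (2*d)
          ≤ (‖Polynomial.eval z p‖ * ‖polyStar p z‖) * A ^ (2*d) := by
        rw [hPrev] at habs1; linarith [habs1]
      exact le_of_mul_le_mul_right h2 hpos
    have h2 : ‖Polynomial.eval z p‖ * (1 - η) ≤ 1 := by
      calc ‖Polynomial.eval z p‖ * (1 - η) ≤ (1 - η)⁻¹ * (1 - η) :=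
            mul_le_mul_of_nonneg_right hpz_ub hη1.le
        _ = 1 := by field_simp
    nlinarith [norm_nonneg (polyStar p z), hη1]
  have hT : ‖laurentEval c d z‖ ≤ (1 - η) * r ^ d := by
    have hrdpos : (0:ℝ) < r ^ d := by positivity
    have hAd : (0:ℝ) < A ^ d := by positivity
    rcases le_or_gt A 1 with hA1 | hA1
    · have hF := hFdisc z hA1
      rw [entLaurent_eq c d hz0, norm_mul, norm_pow] at hF
      have h6 : (1:ℝ) ≤ A ^ d * r ^ d := by
        rw [← mul_pow]
        refine one_le_pow₀ ?_
        calc (1:ℝ) = r⁻¹ * r := by field_simp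
          _ ≤ A * r := mul_le_mul_of_nonneg_right hz1.le hr0.le
      calc ‖laurentEval c d z‖
          = ‖laurentEval c d z‖ * 1 := by ring
        _ ≤ ‖laurentEval c d z‖ * (A ^ d * r ^ d) :=
            mul_le_mul_of_nonneg_left h6 (norm_nonneg _)
        _ = (A ^ d * ‖laurentEval c d z‖) * r ^ d := by ring
        _ ≤ (1 - η) * r ^ d := mul_le_mul_of_nonneg_right hF hrdpos.le
    · have hF := hFout z hA1.le
      rw [entLaurent_eq c d hz0, norm_mul, norm_pow] at hF
      have hsq : A ^ (2*d) = A ^ d * A ^ d := by rw [two_mul, pow_add]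
      rw [hsq] at hF
      have hAr : A ^ d ≤ r ^ d := pow_le_pow_left₀ hA0.le hz2.le d
      have h7 : A ^ d * ‖laurentEval c d z‖ ≤ A ^ d * ((1 - η) * r ^ d) := by
        calc A ^ d * ‖laurentEval c d z‖ ≤ (1 - η) * (A ^ d * A ^ d) := hF
          _ = ((1 - η) * A ^ d) * A ^ d := by ring
          _ ≤ ((1 - η) * A ^ d) * r ^ d :=
              mul_le_mul_of_nonneg_left hAr (mul_nonneg hη1.le hAd.le)
          _ = A ^ d * ((1 - η) * r ^ d) := by ring
      exact le_of_mul_le_mul_left h7 hAd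
  rw [norm_div]
  calc ‖laurentEval c d z‖ / ‖polyStar p z‖
      ≤ ((1 - η) * r ^ d) / (η * (1 - η)) :=
        div_le_div₀ (by positivity) hT (by positivity) hS
    _ = r ^ d * η⁻¹ := by field_simp
end

section
/- Let m ≥ 1 and let Ξ ∈ M_m(ℂ) be skew-Hermitian (Ξ† = −Ξ). Let T be the 2m×2m block matrix [[I_m, −Ξ],[−Ξ, I_m]]. Then T is invertible, ‖T^{−1}‖ ≤ 1, ‖T‖ ≤ √(1+‖Ξ‖²), and every singular value of T is of the form √(1+λ²), where i·λ (λ ∈ ℝ) ranges over the eigenvalues of Ξ. -/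
open Matrix

/-- The operator norm of a complex square matrix, induced by the Euclidean (`ℓ²`) vector norm. -/
noncomputable def l2OpNorm' {n : Type*} [Fintype n] [DecidableEq n]
    (A : Matrix n n ℂ) : ℝ :=
  ‖Matrix.toEuclideanCLM (𝕜 := ℂ) A‖

/-- The block matrix `T = [[I, −Ξ], [−Ξ, I]]`. -/
def blockT {m : ℕ} (Ξ : Matrix (Fin m) (Fin m) ℂ) :
    Matrix (Fin m ⊕ Fin m) (Fin m ⊕ Fin m) ℂ :=
  Matrix.fromBlocks 1 (-Ξ) (-Ξ) 1

section Aux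

open scoped Matrix.Norms.L2Operator

noncomputable instance matrixCStarAlgebra {n : Type*} [Fintype n] [DecidableEq n] :
    CStarAlgebra (Matrix n n ℂ) := { }

lemma l2OpNorm'_eq {n : Type*} [Fintype n] [DecidableEq n] (A : Matrix n n ℂ) :
    l2OpNorm' A = ‖A‖ := rfl

lemma isUnit_fromBlocks_diag {m : ℕ} (A : Matrix (Fin m) (Fin m) ℂ) :
    IsUnit (fromBlocks A 0 0 A) ↔ IsUnit A := by
  rw [Matrix.isUnit_iff_isUnit_det, Matrix.isUnit_iff_isUnit_det,
    Matrix.det_fromBlocks_zero₂₁]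
  simp [isUnit_iff_ne_zero, mul_ne_zero_iff]

lemma spec_fromBlocks_diag {m : ℕ} (A : Matrix (Fin m) (Fin m) ℂ) (z : ℂ) :
    z ∈ spectrum ℂ (fromBlocks A 0 0 A) ↔ z ∈ spectrum ℂ A := by
  rw [spectrum.mem_iff, spectrum.mem_iff, not_iff_not]
  have h : algebraMap ℂ (Matrix (Fin m ⊕ Fin m) (Fin m ⊕ Fin m) ℂ) z - fromBlocks A 0 0 A =
      fromBlocks (algebraMap ℂ (Matrix (Fin m) (Fin m) ℂ) z - A) 0 0
        (algebraMap ℂ (Matrix (Fin m) (Fin m) ℂ) z - A) := by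
    ext (i | i) (j | j) <;>
      simp [Matrix.algebraMap_matrix_apply, Matrix.fromBlocks, Matrix.sub_apply]
  rw [h, isUnit_fromBlocks_diag]

variable {m : ℕ} (Ξ : Matrix (Fin m) (Fin m) ℂ)

lemma blockT_conjT (hskew : Ξᴴ = -Ξ) : (blockT Ξ)ᴴ = fromBlocks 1 Ξ Ξ 1 := by
  simp [blockT, fromBlocks_conjTranspose, hskew]

lemma blockT_mul_self (hskew : Ξᴴ = -Ξ) :
    (blockT Ξ)ᴴ * blockT Ξ = fromBlocks (1 - Ξ ^ 2) 0 0 (1 - Ξ ^ 2) := by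
  rw [blockT_conjT Ξ hskew, blockT, fromBlocks_multiply]
  congr 1 <;> simp [sq, sub_eq_add_neg, mul_neg] <;> abel

lemma self_mul_blockT (hskew : Ξᴴ = -Ξ) :
    blockT Ξ * (blockT Ξ)ᴴ = fromBlocks (1 - Ξ ^ 2) 0 0 (1 - Ξ ^ 2) := by
  rw [blockT_conjT Ξ hskew, blockT, fromBlocks_multiply]
  congr 1 <;> simp [sq, sub_eq_add_neg, mul_neg] <;> abel

lemma spec_one_sub_sq :
    spectrum ℂ ((1 : Matrix (Fin m) (Fin m) ℂ) - Ξ ^ 2) =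
      (fun μ : ℂ => 1 - μ ^ 2) '' spectrum ℂ Ξ := by
  have h0 : ((1 : Polynomial ℂ)).degree < ((Polynomial.X ^ 2 : Polynomial ℂ)).degree := by
    rw [Polynomial.degree_one, Polynomial.degree_X_pow]
    decide
  have hdeg : 0 < ((1 : Polynomial ℂ) - Polynomial.X ^ 2).degree := by
    rw [Polynomial.degree_sub_eq_right_of_degree_lt h0, Polynomial.degree_X_pow]
    decide
  have h : (1 : Matrix (Fin m) (Fin m) ℂ) - Ξ ^ 2 =
      Polynomial.aeval Ξ ((1 : Polynomial ℂ) - Polynomial.X ^ 2) := by simp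
  rw [h, spectrum.map_polynomial_aeval_of_degree_pos Ξ _ hdeg]
  congr 1
  funext μ
  simp

lemma spec_im (hskew : Ξᴴ = -Ξ) {μ : ℂ} (hμ : μ ∈ spectrum ℂ Ξ) :
    μ = Complex.I * μ.im := by
  have hsa : IsSelfAdjoint (Complex.I • Ξ) := by
    show star (Complex.I • Ξ) = Complex.I • Ξ
    rw [star_smul, Matrix.star_eq_conjTranspose, hskew]
    simp [Complex.star_def, Complex.conj_I]
  have hmem : Complex.I * μ ∈ spectrum ℂ (Complex.I • Ξ) := by
    let Iu : ℂˣ := Units.mk0 Complex.I Complex.I_ne_zero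
    have h2 : Iu • μ ∈ spectrum ℂ (Iu • Ξ) := by
      rw [spectrum.unit_smul_eq_smul]
      exact Set.smul_mem_smul_set hμ
    simpa [Iu, Units.smul_def] using h2
  have h := hsa.mem_spectrum_eq_re hmem
  have h2 : (Complex.I * μ).re = -μ.im := by simp
  rw [h2] at h
  push_cast at h
  linear_combination (-Complex.I) * h + μ * Complex.I_sq

lemma norm_le_of_spec {n : Type*} [Fintype n] [DecidableEq n] (A : Matrix n n ℂ)
    (hA : IsSelfAdjoint A) {c : ℝ} (hc : 0 ≤ c)
    (h : ∀ z ∈ spectrum ℂ A, ‖z‖ ≤ c) : ‖A‖ ≤ c := by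
  rw [← hA.toReal_spectralRadius_complex_eq_norm]
  refine ENNReal.toReal_le_of_le_ofReal hc ?_
  rw [spectralRadius]
  refine iSup₂_le fun k hk => ?_
  rw [← enorm_eq_nnnorm, ← ofReal_norm]
  exact ENNReal.ofReal_le_ofReal (h k hk)

end Aux

set_option maxHeartbeats 1000000 in
open scoped Matrix.Norms.L2Operator in
/-- If `Ξ` is skew-Hermitian then `T = [[I,−Ξ],[−Ξ,I]]` is invertible,
`‖T⁻¹‖ ≤ 1`, `‖T‖ ≤ √(1+‖Ξ‖²)`, and the singular values of `T` (i.e. the nonnegative `s` with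
`s²` in the spectrum of `Tᴴ T`) are exactly the numbers `√(1+λ²)` where `iλ` (`λ` real) ranges
over the eigenvalues of `Ξ`. -/
theorem stmt12 (m : ℕ) (hm : 1 ≤ m) (Ξ : Matrix (Fin m) (Fin m) ℂ)
    (hskew : Ξᴴ = -Ξ) :
    IsUnit (blockT Ξ) ∧
    l2OpNorm' (blockT Ξ)⁻¹ ≤ 1 ∧
    l2OpNorm' (blockT Ξ) ≤ Real.sqrt (1 + (l2OpNorm' Ξ)^2) ∧
    (∀ s : ℝ, 0 ≤ s →
      (((s^2 : ℝ) : ℂ) ∈ spectrum ℂ ((blockT Ξ)ᴴ * blockT Ξ) ↔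
        ∃ lam : ℝ, (Complex.I * lam) ∈ spectrum ℂ Ξ ∧ s = Real.sqrt (1 + lam^2))) := by
  haveI : NeZero m := ⟨by omega⟩
  set M : Matrix (Fin m) (Fin m) ℂ := 1 - Ξ ^ 2 with hM
  -- every element of the spectrum of M has the form 1 + t^2 with t real, |t| ≤ ‖Ξ‖
  have hspecM : ∀ z ∈ spectrum ℂ M, ∃ t : ℝ,
      Complex.I * t ∈ spectrum ℂ Ξ ∧ z = ((1 + t ^ 2 : ℝ) : ℂ) ∧ |t| ≤ ‖Ξ‖ := by
    intro z hz
    rw [hM, spec_one_sub_sq] at hz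
    obtain ⟨μ, hμ, rfl⟩ := hz
    obtain ⟨t, hμI⟩ : ∃ t : ℝ, μ = Complex.I * t := ⟨μ.im, spec_im Ξ hskew hμ⟩
    refine ⟨t, by rwa [← hμI], ?_, ?_⟩
    · show 1 - μ ^ 2 = ((1 + t ^ 2 : ℝ) : ℂ)
      rw [hμI, mul_pow, Complex.I_sq]; push_cast; ring
    · have h1 : ‖μ‖ ≤ ‖Ξ‖ := spectrum.norm_le_norm_of_mem hμ
      have h2 : |t| = ‖μ‖ := by
        rw [hμI, norm_mul, Complex.norm_I, one_mul, Complex.norm_real, Real.norm_eq_abs]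
      rw [h2]; exact h1
  -- M is Hermitian
  have hMherm : Mᴴ = M := by
    rw [hM]
    simp [conjTranspose_sub, sq, conjTranspose_mul, hskew]
  -- M is a unit
  have hMunit : IsUnit M := by
    rw [← spectrum.zero_notMem_iff ℂ]
    intro h0
    obtain ⟨t, -, ht, -⟩ := hspecM 0 h0
    have : (1 + t ^ 2 : ℝ) = 0 := by exact_mod_cast ht.symm
    nlinarith
  -- T is a unit
  have hdet : (blockT Ξ).det = M.det := by
    rw [blockT, Matrix.det_fromBlocks_one₁₁, hM]
    congr 1
    simp [sq]
  have hTunit : IsUnit (blockT Ξ) := by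
    rw [Matrix.isUnit_iff_isUnit_det, hdet]
    exact (Matrix.isUnit_iff_isUnit_det M).mp hMunit
  -- the Gram matrices
  have hTT : (blockT Ξ)ᴴ * blockT Ξ = fromBlocks M 0 0 M := blockT_mul_self Ξ hskew
  have hTT' : blockT Ξ * (blockT Ξ)ᴴ = fromBlocks M 0 0 M := self_mul_blockT Ξ hskew
  have hDunit : IsUnit (fromBlocks M 0 0 M) := (isUnit_fromBlocks_diag M).mpr hMunit
  have hDherm : (fromBlocks M 0 0 M)ᴴ = fromBlocks M 0 0 M := by
    rw [fromBlocks_conjTranspose]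
    simp [hMherm]
  refine ⟨hTunit, ?_, ?_, ?_⟩
  · -- ‖T⁻¹‖ ≤ 1
    have hinv : ((blockT Ξ)⁻¹)ᴴ * (blockT Ξ)⁻¹ = (fromBlocks M 0 0 M)⁻¹ := by
      rw [Matrix.conjTranspose_nonsing_inv, ← Matrix.mul_inv_rev, hTT']
    have hn : ‖(blockT Ξ)⁻¹‖ * ‖(blockT Ξ)⁻¹‖ = ‖(fromBlocks M 0 0 M)⁻¹‖ := by
      rw [← Matrix.l2_opNorm_conjTranspose_mul_self, hinv]
    -- spectrum of the inverse
    have hDinvherm : IsSelfAdjoint ((fromBlocks M 0 0 M)⁻¹) := by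
      show star _ = _
      rw [Matrix.star_eq_conjTranspose, Matrix.conjTranspose_nonsing_inv, hDherm]
    have hbound : ∀ z ∈ spectrum ℂ ((fromBlocks M 0 0 M)⁻¹), ‖z‖ ≤ 1 := by
      intro z hz
      have hinveq : (fromBlocks M 0 0 M)⁻¹ = ↑hDunit.unit⁻¹ :=
        Matrix.inv_eq_right_inv (by
          have h := hDunit.unit.mul_inv
          rwa [hDunit.unit_spec] at h)
      have hz0 : z ≠ 0 := by
        intro h
        rw [h, hinveq, spectrum.zero_mem_iff] at hz
        exact hz (Units.isUnit _)
      have hzinv : z⁻¹ ∈ spectrum ℂ (fromBlocks M 0 0 M) := by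
        have := (spectrum.inv_mem_iff (r := (Units.mk0 z hz0)⁻¹) (a := hDunit.unit)).mpr
        simp only [inv_inv, Units.val_mk0, hDunit.unit_spec] at this
        rw [hinveq] at hz
        exact this hz
      rw [spec_fromBlocks_diag] at hzinv
      obtain ⟨t, -, ht, -⟩ := hspecM _ hzinv
      have : z = (((1 + t ^ 2 : ℝ) : ℂ))⁻¹ := by rw [← ht, inv_inv]
      rw [this, norm_inv]
      have h1 : (1 : ℝ) ≤ ‖((1 + t ^ 2 : ℝ) : ℂ)‖ := by
        rw [Complex.norm_real, Real.norm_eq_abs, abs_of_nonneg (by positivity)]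
        nlinarith
      rw [inv_le_one_iff₀]
      right; exact h1
    have h1 : ‖(fromBlocks M 0 0 M)⁻¹‖ ≤ 1 := norm_le_of_spec _ hDinvherm zero_le_one hbound
    have h2 : ‖(blockT Ξ)⁻¹‖ * ‖(blockT Ξ)⁻¹‖ ≤ 1 := hn.le.trans h1
    rw [l2OpNorm'_eq]
    nlinarith [norm_nonneg ((blockT Ξ)⁻¹)]
  · -- ‖T‖ ≤ √(1 + ‖Ξ‖²)
    have hDsa : IsSelfAdjoint (fromBlocks M 0 0 M) := by
      show star _ = _
      rw [Matrix.star_eq_conjTranspose, hDherm]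
    have hbound : ∀ z ∈ spectrum ℂ (fromBlocks M 0 0 M), ‖z‖ ≤ 1 + ‖Ξ‖ ^ 2 := by
      intro z hz
      rw [spec_fromBlocks_diag] at hz
      obtain ⟨t, -, ht, htle⟩ := hspecM _ hz
      rw [ht, Complex.norm_real, Real.norm_eq_abs, abs_of_nonneg (by positivity)]
      nlinarith [sq_abs t, mul_self_le_mul_self (abs_nonneg t) htle]
    have h1 : ‖fromBlocks M 0 0 M‖ ≤ 1 + ‖Ξ‖ ^ 2 :=
      norm_le_of_spec _ hDsa (by positivity) hbound
    have hn : ‖blockT Ξ‖ * ‖blockT Ξ‖ = ‖fromBlocks M 0 0 M‖ := by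
      rw [← Matrix.l2_opNorm_conjTranspose_mul_self, hTT]
    rw [l2OpNorm'_eq, l2OpNorm'_eq]
    rw [Real.le_sqrt (norm_nonneg _)]
    · nlinarith
    · positivity
  · -- singular values
    intro s hs
    rw [hTT]
    constructor
    · intro h
      rw [spec_fromBlocks_diag] at h
      obtain ⟨t, htmem, ht, -⟩ := hspecM _ h
      have hs2 : s ^ 2 = 1 + t ^ 2 := by exact_mod_cast ht
      refine ⟨t, htmem, ?_⟩
      rw [← hs2, Real.sqrt_sq hs]
    · rintro ⟨lam, hlam, rfl⟩
      rw [spec_fromBlocks_diag, hM, spec_one_sub_sq]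
      refine ⟨Complex.I * lam, hlam, ?_⟩
      have h1 : Real.sqrt (1 + lam ^ 2) ^ 2 = 1 + lam ^ 2 :=
        Real.sq_sqrt (by positivity)
      rw [h1]
      show (1 : ℂ) - (Complex.I * (lam : ℂ)) ^ 2 = ((1 + lam ^ 2 : ℝ) : ℂ)
      rw [mul_pow, Complex.I_sq]; push_cast; ring
end

section
/- Let u ∈ L^∞(T) with Fourier coefficients c_j := ∫_T u(z)·z^{−j}, and suppose c_j = 0 for all j > d. Fix an integer 0 ≤ k ≤ d, set n := d − k, and let Ξ_k ∈ M_{n+1}(ℂ) be the Hankel matrix with entries (Ξ_k)_{ij} = c_{i+j+k} for 0 ≤ i, j ≤ n. Then ‖Ξ_k‖ ≤ esssup_{z∈T} |u(z)|. -/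
open MeasureTheory AddCircle

instance : Fact (0 < 2 * Real.pi) := ⟨Real.two_pi_pos⟩

private lemma coeFn_finsetSum {α : Type*} [MeasurableSpace α] {μ : Measure α} {ι : Type*}
    (s : Finset ι) (f : ι → Lp ℂ 2 μ) :
    ⇑(∑ i ∈ s, f i) =ᵐ[μ] fun z => ∑ i ∈ s, f i z := by
  classical
  induction s using Finset.induction with
  | empty => simp only [Finset.sum_empty]; exact Lp.coeFn_zero ℂ 2 μ
  | @insert a s h ih =>
      rw [Finset.sum_insert h]
      filter_upwards [Lp.coeFn_add (f a) (∑ i ∈ s, f i), ih] with z h1 h2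
      rw [h1, Pi.add_apply, h2]
      exact (Finset.sum_insert (f := fun i => (f i : α → ℂ) z) h).symm

private lemma norm_sum_fourierLp {N : ℕ} (f : Fin N → ℤ) (hf : Function.Injective f)
    (c : EuclideanSpace ℂ (Fin N)) :
    ‖∑ i, c i • fourierLp (T := 2 * Real.pi) 2 (f i)‖ = ‖c‖ := by
  have hON := (orthonormal_fourier (T := 2 * Real.pi)).comp f hf
  have h := hON.inner_sum c c Finset.univ
  simp only [Function.comp] at h
  have h1 : ‖∑ i, c i • fourierLp (T := 2 * Real.pi) 2 (f i)‖ ^ 2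
      = ∑ i, ‖c i‖ ^ 2 := by
    rw [← @inner_self_eq_norm_sq ℂ, h]
    simp_rw [RCLike.conj_mul]
    rw [map_sum]
    simp [← Complex.ofReal_pow]
  have h2 : ‖c‖ ^ 2 = ∑ i, ‖c i‖ ^ 2 := by
    rw [EuclideanSpace.norm_eq, Real.sq_sqrt (by positivity)]
  nlinarith [norm_nonneg (∑ i, c i • fourierLp (T := 2 * Real.pi) 2 (f i)), norm_nonneg c]

private lemma coeFn_sum_smul_fourierLp {N : ℕ} (g : Fin N → ℤ) (c : Fin N → ℂ) :
    ⇑(∑ j, c j • fourierLp (T := 2 * Real.pi) 2 (g j)) =ᵐ[haarAddCircle]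
      fun z => ∑ j, c j • fourier (g j) z := by
  have h1 := coeFn_finsetSum Finset.univ
    (fun j : Fin N => c j • fourierLp (T := 2 * Real.pi) 2 (g j))
  have h2 : ∀ᵐ z ∂(haarAddCircle (T := 2 * Real.pi)), ∀ j : Fin N,
      ((c j • fourierLp (T := 2 * Real.pi) 2 (g j) : Lp ℂ 2 haarAddCircle) : _ → ℂ) z
        = c j • fourier (g j) z := by
    rw [MeasureTheory.ae_all_iff]
    intro j
    filter_upwards [Lp.coeFn_smul (c j) (fourierLp (T := 2 * Real.pi) 2 (g j)),
      coeFn_fourierLp (T := 2 * Real.pi) 2 (g j)] with z e1 e2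
    rw [e1, Pi.smul_apply, e2]
  filter_upwards [h1, h2] with z hz1 hz2
  rw [hz1]
  exact Finset.sum_congr rfl fun j _ => hz2 j

/-- Let `u ∈ L^∞(T)` with Fourier coefficients `c_j` vanishing for `j > d`.
For `0 ≤ k ≤ d` and `n = d − k`, the `(n+1)×(n+1)` Hankel matrix `Ξ_k` with entries
`(Ξ_k)_{ij} = c_{i+j+k}` satisfies `‖Ξ_k‖ ≤ esssup |u|`. -/
theorem stmt13 (u : AddCircle (2 * Real.pi) → ℂ)
    (hu : MemLp u ⊤ haarAddCircle)
    (d : ℕ) (hvan : ∀ j : ℤ, (d : ℤ) < j → fourierCoeff u j = 0)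
    (k : ℕ) (hk : k ≤ d) :
    l2OpNorm' (Matrix.of fun i j : Fin (d - k + 1) =>
        fourierCoeff u ((i : ℤ) + (j : ℤ) + (k : ℤ)))
      ≤ (eLpNorm u ⊤ haarAddCircle).toReal := by
  classical
  set A : Matrix (Fin (d - k + 1)) (Fin (d - k + 1)) ℂ :=
    Matrix.of (fun i j : Fin (d - k + 1) =>
      fourierCoeff u ((i : ℤ) + (j : ℤ) + (k : ℤ))) with hA
  set M : ℝ := (eLpNorm u ⊤ haarAddCircle).toReal with hMdef
  have hMnn : 0 ≤ M := ENNReal.toReal_nonneg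
  have huint : Integrable u haarAddCircle := hu.integrable le_top
  have key : ∀ x y : EuclideanSpace ℂ (Fin (d - k + 1)),
      ‖(inner ℂ y ((Matrix.toEuclideanCLM (𝕜 := ℂ) A) x) : ℂ)‖ ≤ M * (‖y‖ * ‖x‖) := by
    intro x y
    set P : AddCircle (2 * Real.pi) → ℂ :=
      fun z => ∑ j : Fin (d - k + 1), x j • fourier (T := 2 * Real.pi) (-((j : ℤ) + (k : ℤ))) z with hPdef
    set P' : Lp ℂ 2 haarAddCircle :=
      ∑ j : Fin (d - k + 1), x j • fourierLp (T := 2 * Real.pi) 2 (-((j : ℤ) + (k : ℤ))) with hP'def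
    set Q' : Lp ℂ 2 haarAddCircle :=
      ∑ i : Fin (d - k + 1), y i • fourierLp (T := 2 * Real.pi) 2 ((i : ℤ)) with hQ'def
    have hPP' : ⇑P' =ᵐ[haarAddCircle] P :=
      coeFn_sum_smul_fourierLp (fun j : Fin (d - k + 1) => -((j : ℤ) + (k : ℤ))) x
    have hPmem : MemLp P 2 haarAddCircle := (Lp.memLp P').ae_eq hPP'
    have huP : MemLp (u • P) 2 haarAddCircle := hPmem.smul hu
    set G : Lp ℂ 2 haarAddCircle := huP.toLp (u • P) with hGdef
    -- Fourier coefficients of u • P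
    have hcoeff : ∀ m : ℤ, fourierCoeff (u • P) m
        = ∑ j : Fin (d - k + 1), fourierCoeff u (m + (j : ℤ) + (k : ℤ)) * x j := by
      intro m
      have hint : ∀ j : Fin (d - k + 1), Integrable
          (fun z => x j • (fourier (-(m + (j : ℤ) + (k : ℤ))) z * u z)) haarAddCircle := by
        intro j
        exact (huint.bdd_mul (map_continuous _).aestronglyMeasurable
          (Filter.Eventually.of_forall fun z =>
            le_of_le_of_eq ((fourier _).norm_coe_le_norm z) (fourier_norm _))).smul (x j)
      calc fourierCoeff (u • P) m
          = ∫ z, ∑ j : Fin (d - k + 1),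
              x j • (fourier (-(m + (j : ℤ) + (k : ℤ))) z * u z) ∂haarAddCircle := by
            rw [fourierCoeff]
            congr 1
            ext z
            simp only [hPdef, Pi.smul_apply, Pi.mul_apply, smul_eq_mul, Finset.mul_sum]
            refine Finset.sum_congr rfl fun j _ => ?_
            have : -(m + (j : ℤ) + (k : ℤ)) = (-m) + (-((j : ℤ) + (k : ℤ))) := by ring
            rw [this, fourier_add]
            ring
        _ = ∑ j : Fin (d - k + 1), ∫ z,
              x j • (fourier (-(m + (j : ℤ) + (k : ℤ))) z * u z) ∂haarAddCircle :=
            integral_finset_sum _ (fun j _ => hint j)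
        _ = ∑ j : Fin (d - k + 1), fourierCoeff u (m + (j : ℤ) + (k : ℤ)) * x j := by
            refine Finset.sum_congr rfl fun j _ => ?_
            rw [integral_smul, fourierCoeff]
            simp [smul_eq_mul]
            ring
    -- identify the bilinear form with an inner product in L²
    have hinner : (inner ℂ y ((Matrix.toEuclideanCLM (𝕜 := ℂ) A) x) : ℂ) = inner ℂ Q' G := by
      have hG : ∀ i : ℤ, (inner ℂ (fourierLp (T := 2 * Real.pi) 2 i) G : ℂ)
          = fourierCoeff (u • P) i := by
        intro i
        rw [← coe_fourierBasis, ← fourierBasis.repr_apply_apply, fourierBasis_repr]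
        rw [fourierCoeff, fourierCoeff]
        refine integral_congr_ae ?_
        filter_upwards [huP.coeFn_toLp] with z hz
        rw [hz]
      rw [hQ'def, sum_inner]
      simp_rw [inner_smul_left, hG, hcoeff]
      rw [PiLp.inner_apply]
      refine Finset.sum_congr rfl fun i _ => ?_
      simp only [RCLike.inner_apply, smul_eq_mul]
      exact mul_comm _ _
    have hQnorm : ‖Q'‖ = ‖y‖ :=
      norm_sum_fourierLp (fun i : Fin (d - k + 1) => (i : ℤ))
        (fun a b hab => Fin.ext (by
          simp only at hab
          exact_mod_cast hab)) y
    have hPnorm : ‖P'‖ = ‖x‖ :=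
      norm_sum_fourierLp (fun j : Fin (d - k + 1) => -((j : ℤ) + (k : ℤ)))
        (fun a b hab => Fin.ext (by
          simp only at hab
          have := neg_inj.mp hab
          exact_mod_cast add_right_cancel this)) x
    have hGnorm : ‖G‖ ≤ M * ‖x‖ := by
      rw [hGdef, Lp.norm_toLp]
      have h1 : eLpNorm (u • P) 2 haarAddCircle
          ≤ eLpNorm u ⊤ haarAddCircle * eLpNorm P 2 haarAddCircle :=
        eLpNorm_smul_le_eLpNorm_top_mul_eLpNorm 2 hPmem.1 u
      have h2 : eLpNorm u ⊤ haarAddCircle * eLpNorm P 2 haarAddCircle ≠ ⊤ :=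
        ENNReal.mul_ne_top hu.2.ne hPmem.2.ne
      calc (eLpNorm (u • P) 2 haarAddCircle).toReal
          ≤ (eLpNorm u ⊤ haarAddCircle * eLpNorm P 2 haarAddCircle).toReal :=
            ENNReal.toReal_mono h2 h1
        _ = M * (eLpNorm P 2 haarAddCircle).toReal := by rw [ENNReal.toReal_mul]
        _ = M * ‖P'‖ := by rw [Lp.norm_def, eLpNorm_congr_ae hPP']
        _ = M * ‖x‖ := by rw [hPnorm]
    calc ‖(inner ℂ y ((Matrix.toEuclideanCLM (𝕜 := ℂ) A) x) : ℂ)‖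
        = ‖(inner ℂ Q' G : ℂ)‖ := by rw [hinner]
      _ ≤ ‖Q'‖ * ‖G‖ := norm_inner_le_norm _ _
      _ ≤ ‖y‖ * (M * ‖x‖) := by
          rw [hQnorm]
          exact mul_le_mul_of_nonneg_left hGnorm (norm_nonneg y)
      _ = M * (‖y‖ * ‖x‖) := by ring
  show ‖Matrix.toEuclideanCLM (𝕜 := ℂ) A‖ ≤ M
  refine ContinuousLinearMap.opNorm_le_bound _ hMnn fun x => ?_
  set zv := (Matrix.toEuclideanCLM (𝕜 := ℂ) A) x with hzv
  have h1 := key x zv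
  have h3 : ‖zv‖ ^ 2 ≤ M * (‖zv‖ * ‖x‖) := by
    calc ‖zv‖ ^ 2 = ‖(inner ℂ zv zv : ℂ)‖ := by
          rw [inner_self_eq_norm_sq_to_K]
          simp [abs_of_nonneg (norm_nonneg zv)]
      _ ≤ M * (‖zv‖ * ‖x‖) := h1
  rcases eq_or_lt_of_le (norm_nonneg zv) with h | h
  · rw [← h]
    positivity
  · nlinarith [norm_nonneg x]
end

section
/- Let m ≥ 1 and let Ξ ∈ M_m(ℂ) be skew-Hermitian (Ξ† = −Ξ). Then I − Ξ² is Hermitian positive definite, the quantity a₀ := e₀ᵀ(I−Ξ²)^{−1}e₀ is a real number satisfying a₀ ≥ 1/(1+‖Ξ‖²), and |e₀ᵀ(I−Ξ²)^{−1}Ξ e₀| ≤ 1. In particular, if 0 < η < 1 and ‖Ξ‖ ≤ (1−η)/√(1−(1−η)²), then a₀ ≥ 2η − η² ≥ η. -/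
open Matrix
open scoped ComplexOrder

variable {k : Type*} [Fintype k] [DecidableEq k]

lemma quad_single (A : Matrix k k ℂ) (i : k) :
    star (Pi.single i 1) ⬝ᵥ (A *ᵥ Pi.single i 1) = A i i := by
  simp [Matrix.mulVec_single, Pi.single_apply, dotProduct, apply_ite]

lemma cs_dot (x y : k → ℂ) :
    ‖star x ⬝ᵥ y‖ ^ 2 ≤ (star x ⬝ᵥ x).re * (star y ⬝ᵥ y).re := by
  have h2 := norm_inner_le_norm (𝕜 := ℂ) ((WithLp.equiv 2 (k → ℂ)).symm x) ((WithLp.equiv 2 (k → ℂ)).symm y)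
  have h3 := inner_self_eq_norm_sq (𝕜 := ℂ) ((WithLp.equiv 2 (k → ℂ)).symm x)
  have h4 := inner_self_eq_norm_sq (𝕜 := ℂ) ((WithLp.equiv 2 (k → ℂ)).symm y)
  have h1 : inner ℂ ((WithLp.equiv 2 (k → ℂ)).symm x) ((WithLp.equiv 2 (k → ℂ)).symm y)
      = star x ⬝ᵥ y := by
    rw [dotProduct_comm]; exact EuclideanSpace.inner_toLp_toLp (𝕜 := ℂ) x y
  have h5 : inner ℂ ((WithLp.equiv 2 (k → ℂ)).symm x) ((WithLp.equiv 2 (k → ℂ)).symm x)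
      = star x ⬝ᵥ x := by
    rw [dotProduct_comm]; exact EuclideanSpace.inner_toLp_toLp (𝕜 := ℂ) x x
  have h6 : inner ℂ ((WithLp.equiv 2 (k → ℂ)).symm y) ((WithLp.equiv 2 (k → ℂ)).symm y)
      = star y ⬝ᵥ y := by
    rw [dotProduct_comm]; exact EuclideanSpace.inner_toLp_toLp (𝕜 := ℂ) y y
  rw [h1] at h2
  rw [h5] at h3
  rw [h6] at h4
  simp only [RCLike.re_to_complex] at h3 h4
  rw [h3, h4, ← mul_pow]
  exact pow_le_pow_left₀ (norm_nonneg _) h2 2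

lemma quad_factor (S : Matrix k k ℂ) (u v : k → ℂ) :
    star u ⬝ᵥ ((star S * S) *ᵥ v) = star (S *ᵥ u) ⬝ᵥ (S *ᵥ v) := by
  rw [← Matrix.mulVec_mulVec, Matrix.dotProduct_mulVec, Matrix.star_mulVec,
    Matrix.star_eq_conjTranspose]

open scoped MatrixOrder in
lemma psd_cs {A : Matrix k k ℂ} (hA : A.PosSemidef) (x y : k → ℂ) :
    ‖star x ⬝ᵥ (A *ᵥ y)‖ ^ 2
      ≤ (star x ⬝ᵥ (A *ᵥ x)).re * (star y ⬝ᵥ (A *ᵥ y)).re := by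
  obtain ⟨S, rfl⟩ := CStarAlgebra.nonneg_iff_eq_star_mul_self.mp hA.nonneg
  rw [quad_factor S x y, quad_factor S x x, quad_factor S y y]
  exact cs_dot _ _

lemma norm_sq_dot (v : k → ℂ) :
    (star v ⬝ᵥ v).re = ‖(WithLp.equiv 2 (k → ℂ)).symm v‖ ^ 2 := by
  have h3 := inner_self_eq_norm_sq (𝕜 := ℂ) ((WithLp.equiv 2 (k → ℂ)).symm v)
  have h5 : inner ℂ ((WithLp.equiv 2 (k → ℂ)).symm v) ((WithLp.equiv 2 (k → ℂ)).symm v)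
      = star v ⬝ᵥ v := by
    rw [dotProduct_comm]; exact EuclideanSpace.inner_toLp_toLp (𝕜 := ℂ) v v
  rw [h5] at h3
  simpa [RCLike.re_to_complex] using h3

set_option maxHeartbeats 1000000 in
set_option synthInstance.maxHeartbeats 200000 in
/-- For a skew-Hermitian matrix `Ξ`, the matrix `I − Ξ²` is Hermitian positive
definite, `a₀ := e₀ᵀ(I−Ξ²)⁻¹e₀` is real with `a₀ ≥ 1/(1+‖Ξ‖²)`, and
`|e₀ᵀ(I−Ξ²)⁻¹Ξe₀| ≤ 1`.  Moreover if `0 < η < 1` and `‖Ξ‖ ≤ (1−η)/√(1−(1−η)²)` then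
`a₀ ≥ 2η − η² ≥ η`. -/
theorem stmt15 (m : ℕ) (hm : 1 ≤ m) (Ξ : Matrix (Fin m) (Fin m) ℂ)
    (hskew : Ξᴴ = -Ξ) :
    (1 - Ξ^2).PosDef ∧
    (((1 - Ξ^2 : Matrix (Fin m) (Fin m) ℂ)⁻¹) ⟨0, hm⟩ ⟨0, hm⟩).im = 0 ∧
    1 / (1 + (l2OpNorm' Ξ)^2)
      ≤ (((1 - Ξ^2 : Matrix (Fin m) (Fin m) ℂ)⁻¹) ⟨0, hm⟩ ⟨0, hm⟩).re ∧
    ‖(((1 - Ξ^2 : Matrix (Fin m) (Fin m) ℂ)⁻¹ * Ξ)) ⟨0, hm⟩ ⟨0, hm⟩‖ ≤ 1 ∧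
    (∀ η : ℝ, 0 < η → η < 1 →
      l2OpNorm' Ξ ≤ (1 - η) / Real.sqrt (1 - (1 - η)^2) →
      2*η - η^2 ≤ (((1 - Ξ^2 : Matrix (Fin m) (Fin m) ℂ)⁻¹) ⟨0, hm⟩ ⟨0, hm⟩).re ∧
      η ≤ 2*η - η^2) := by
  set i0 : Fin m := ⟨0, hm⟩ with hi0
  set B : Matrix (Fin m) (Fin m) ℂ := 1 - Ξ^2 with hBdef
  set e : Fin m → ℂ := Pi.single i0 1 with he
  have he0 : e ≠ 0 := by
    intro h
    have := congrFun h i0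
    simp [he] at this
  have hXX : Ξᴴ * Ξ = -(Ξ^2) := by rw [hskew, neg_mul, sq]
  have hBeq : B = 1 + Ξᴴ * Ξ := by rw [hBdef, hXX]; abel
  have hB : B.PosDef := by
    rw [hBeq]
    exact Matrix.PosDef.one.add_posSemidef (Matrix.posSemidef_conjTranspose_mul_self Ξ)
  have hdet : IsUnit B.det := (Matrix.isUnit_iff_isUnit_det B).mp hB.isUnit
  have hBBinv : B * B⁻¹ = 1 := Matrix.mul_nonsing_inv B hdet
  have hBinvB : B⁻¹ * B = 1 := Matrix.nonsing_inv_mul B hdet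
  have hBinv : (B⁻¹).PosDef := hB.inv
  have hherm : B⁻¹ᴴ = B⁻¹ := hBinv.1
  have him : (B⁻¹ i0 i0).im = 0 := by
    have h2 : (starRingEnd ℂ) (B⁻¹ i0 i0) = B⁻¹ i0 i0 := hBinv.1.apply i0 i0
    exact Complex.conj_eq_iff_im.mp h2
  have hq0 : 0 < (B⁻¹ i0 i0).re := by
    have := hBinv.re_dotProduct_pos he0
    rw [quad_single B⁻¹ i0] at this
    simpa [RCLike.re_to_complex] using this
  have hee : star e ⬝ᵥ e = 1 := by
    have h := quad_single (1 : Matrix (Fin m) (Fin m) ℂ) i0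
    rwa [Matrix.one_mulVec, Matrix.one_apply_eq] at h
  have key1 : 1 ≤ (B i0 i0).re * (B⁻¹ i0 i0).re := by
    have h := psd_cs hB.posSemidef e (B⁻¹ *ᵥ e)
    have h1 : B *ᵥ (B⁻¹ *ᵥ e) = e := by
      rw [Matrix.mulVec_mulVec, hBBinv, Matrix.one_mulVec]
    rw [h1] at h
    have h3 : star (B⁻¹ *ᵥ e) ⬝ᵥ e = star e ⬝ᵥ (B⁻¹ *ᵥ e) := by
      rw [Matrix.star_mulVec, hherm, ← Matrix.dotProduct_mulVec]
    rw [h3, hee, quad_single, quad_single] at h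
    simpa using h
  have hBentry : B i0 i0 = 1 + star (Ξ *ᵥ e) ⬝ᵥ (Ξ *ᵥ e) := by
    have h1 : B i0 i0 = star e ⬝ᵥ (B *ᵥ e) := (quad_single B i0).symm
    have h2 : star (Ξ *ᵥ e) ⬝ᵥ (Ξ *ᵥ e) = star e ⬝ᵥ ((Ξᴴ * Ξ) *ᵥ e) := by
      rw [Matrix.star_mulVec, ← Matrix.dotProduct_mulVec, Matrix.mulVec_mulVec]
    rw [h1, hBeq, Matrix.add_mulVec, dotProduct_add, Matrix.one_mulVec, hee, h2]
  have hNnn : 0 ≤ l2OpNorm' Ξ := norm_nonneg _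
  have hr0 : 0 ≤ (star (Ξ *ᵥ e) ⬝ᵥ (Ξ *ᵥ e)).re := by
    rw [norm_sq_dot]; positivity
  have hrN : (star (Ξ *ᵥ e) ⬝ᵥ (Ξ *ᵥ e)).re ≤ (l2OpNorm' Ξ)^2 := by
    rw [norm_sq_dot]
    have h1 : (WithLp.equiv 2 (Fin m → ℂ)).symm (Ξ *ᵥ e)
        = Matrix.toEuclideanCLM (𝕜 := ℂ) Ξ ((WithLp.equiv 2 (Fin m → ℂ)).symm e) := by
      rfl
    have h2 : ‖(WithLp.equiv 2 (Fin m → ℂ)).symm e‖ = 1 := by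
      have h5 : ((WithLp.equiv 2 (Fin m → ℂ)).symm e : EuclideanSpace ℂ (Fin m))
          = EuclideanSpace.single i0 (1 : ℂ) := rfl
      rw [h5, EuclideanSpace.norm_single, norm_one]
    have h3 := (Matrix.toEuclideanCLM (𝕜 := ℂ) Ξ).le_opNorm
      ((WithLp.equiv 2 (Fin m → ℂ)).symm e)
    rw [h2, mul_one] at h3
    rw [h1]
    have h4 := pow_le_pow_left₀ (norm_nonneg _) h3 2
    simpa [l2OpNorm'] using h4
  have part3 : 1 / (1 + (l2OpNorm' Ξ)^2) ≤ (B⁻¹ i0 i0).re := by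
    have hBre : (B i0 i0).re = 1 + (star (Ξ *ᵥ e) ⬝ᵥ (Ξ *ᵥ e)).re := by
      rw [hBentry]; simp
    rw [hBre] at key1
    rw [div_le_iff₀ (by positivity)]
    nlinarith [mul_nonneg hq0.le (sub_nonneg.mpr hrN)]
  have hcommB : Ξ * B = B * Ξ := by
    rw [hBdef]; noncomm_ring
  have hcomm : B⁻¹ * Ξ = Ξ * B⁻¹ := by
    calc B⁻¹ * Ξ = B⁻¹ * Ξ * (B * B⁻¹) := by rw [hBBinv, mul_one]
      _ = B⁻¹ * (Ξ * B) * B⁻¹ := by noncomm_ring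
      _ = B⁻¹ * (B * Ξ) * B⁻¹ := by rw [hcommB]
      _ = (B⁻¹ * B) * (Ξ * B⁻¹) := by noncomm_ring
      _ = Ξ * B⁻¹ := by rw [hBinvB, one_mul]
  have hRel : Ξᴴ * B⁻¹ * Ξ = 1 - B⁻¹ := by
    have hX2 : (Ξ^2 : Matrix (Fin m) (Fin m) ℂ) = 1 - B := by rw [hBdef]; abel
    have h1 : Ξ * B⁻¹ * Ξ = B⁻¹ * Ξ^2 := by rw [← hcomm, mul_assoc, ← sq]
    have h2 : B⁻¹ * Ξ^2 = B⁻¹ - 1 := by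
      rw [hX2, mul_sub, mul_one, hBinvB]
    rw [hskew, neg_mul, neg_mul, h1, h2, neg_sub]
  have part4 : ‖(B⁻¹ * Ξ) i0 i0‖ ≤ 1 := by
    have h := psd_cs hBinv.posSemidef e (Ξ *ᵥ e)
    have h1 : (B⁻¹ * Ξ) i0 i0 = star e ⬝ᵥ (B⁻¹ *ᵥ (Ξ *ᵥ e)) := by
      rw [Matrix.mulVec_mulVec, quad_single]
    have h2 : star (Ξ *ᵥ e) ⬝ᵥ (B⁻¹ *ᵥ (Ξ *ᵥ e)) = (1 - B⁻¹) i0 i0 := by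
      rw [Matrix.star_mulVec, ← Matrix.dotProduct_mulVec, Matrix.mulVec_mulVec,
        Matrix.mulVec_mulVec, hRel, quad_single]
    rw [h2, quad_single B⁻¹ i0] at h
    have h4 : ((1 - B⁻¹) i0 i0).re = 1 - (B⁻¹ i0 i0).re := by
      simp [Matrix.sub_apply, Matrix.one_apply_eq]
    rw [h4] at h
    rw [h1]
    nlinarith [norm_nonneg (star e ⬝ᵥ (B⁻¹ *ᵥ (Ξ *ᵥ e))), h, hq0,
      sq_nonneg ((B⁻¹ i0 i0).re - 1/2),
      sq_nonneg (‖star e ⬝ᵥ (B⁻¹ *ᵥ (Ξ *ᵥ e))‖ - 1)]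
  have part5 : ∀ η : ℝ, 0 < η → η < 1 →
      l2OpNorm' Ξ ≤ (1 - η) / Real.sqrt (1 - (1 - η)^2) →
      2*η - η^2 ≤ (B⁻¹ i0 i0).re ∧ η ≤ 2*η - η^2 := by
    intro η hη0 hη1 hle
    have hs : 0 < 1 - (1-η)^2 := by nlinarith
    have hsq : Real.sqrt (1-(1-η)^2) ^ 2 = 1-(1-η)^2 := Real.sq_sqrt hs.le
    have hsp : 0 < Real.sqrt (1-(1-η)^2) := Real.sqrt_pos.mpr hs
    have h2 : l2OpNorm' Ξ * Real.sqrt (1-(1-η)^2) ≤ 1-η := (le_div_iff₀ hsp).mp hle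
    have h3 : (l2OpNorm' Ξ)^2 * (1-(1-η)^2) ≤ (1-η)^2 := by
      have h4 := mul_le_mul h2 h2 (mul_nonneg hNnn hsp.le) (by nlinarith)
      nlinarith [h4, hsq]
    refine ⟨le_trans ?_ part3, by nlinarith⟩
    rw [le_div_iff₀ (by positivity)]
    nlinarith [h3]
  exact ⟨hB, him, part3, part4, part5⟩
end
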